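/- arXiv:math/0211349 — 3 statements merged into one kernel-verified Lean document; each statement's English description precedes it below -/
import Mathlib

section
/- Let g be a solution of the Ricci flow on Ω × [0,T) and let ε, δ > 0. At every point of Ω × (0,T) where K := R + ε/(2(t+δ)) > 0, the Levi-Civita Christoffel symbols of the space-time metric g̃_{ε,δ} are: (1) Γ̃^k_{ij} = Γ^k_{ij} for 1 ≤ i,j,k ≤ n; (2) Γ̃^0_{ij} = R_{ij}/K for 1 ≤ i,j ≤ n; (3) Γ̃^k_{i0} = Γ̃^k_{0i} = −R^k_i for 1 ≤ i,k ≤ n; (4) Γ̃^k_{00} = −½ g^{kl}∂_l R for 1 ≤ k ≤ n; (5) Γ̃^0_{i0} = Γ̃^0_{0i} = ∂_i R/(2K) for 1 ≤ i ≤ n; (6) Γ̃^0_{00} = ( ½ ∂R/∂t − ε/(4(t+δ)²) )/K. -/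
/- Common local-coordinate framework for the Chow–Chu space-time
   interpretation of Hamilton's Harnack inequality for the Ricci flow. -/

noncomputable section
open scoped BigOperators
open Filter

namespace CC

/-- A time-dependent scalar field on `ℝⁿ × ℝ` (space variable first, then time). -/
abbrev Fld (n : ℕ) := (Fin n → ℝ) → ℝ → ℝ

/-- A time-dependent 2-tensor field (e.g. a metric) in local coordinates. -/
abbrev Met (n : ℕ) := Fin n → Fin n → Fld n

variable {n : ℕ}

/-- Spatial partial derivative `∂ᵢ` of a time-dependent scalar field. -/
def spd (i : Fin n) (u : Fld n) : Fld n :=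
  fun x t => fderiv ℝ (fun y => u y t) x (Pi.single i 1)

/-- Time partial derivative `∂/∂t` of a time-dependent scalar field. -/
def tpd (u : Fld n) : Fld n :=
  fun x t => deriv (fun s => u x s) t

/-- Christoffel symbols `Γ^k_{ij} = ½ g^{kl}(∂ᵢ g_{jl} + ∂ⱼ g_{il} − ∂ₗ g_{ij})`. -/
def Gamma (g ginv : Met n) (k i j : Fin n) : Fld n :=
  fun x t => (1/2) * ∑ l, ginv k l x t *
    (spd i (g j l) x t + spd j (g i l) x t - spd l (g i j) x t)

/-- Riemann curvature `R^l_{ijk} = ∂ᵢΓ^l_{jk} − ∂ⱼΓ^l_{ik} + Γ^m_{jk}Γ^l_{im} − Γ^m_{ik}Γ^l_{jm}`. -/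
def Riem (g ginv : Met n) (l i j k : Fin n) : Fld n :=
  fun x t => spd i (Gamma g ginv l j k) x t - spd j (Gamma g ginv l i k) x t
    + ∑ m, (Gamma g ginv m j k x t * Gamma g ginv l i m x t
          - Gamma g ginv m i k x t * Gamma g ginv l j m x t)

/-- Ricci curvature `R_{jk} = R^p_{pjk}`. -/
def Ric (g ginv : Met n) (j k : Fin n) : Fld n :=
  fun x t => ∑ p, Riem g ginv p p j k x t

/-- Scalar curvature `R = g^{jk} R_{jk}`. -/
def Scal (g ginv : Met n) : Fld n :=
  fun x t => ∑ j, ∑ k, ginv j k x t * Ric g ginv j k x t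

/-- Ricci curvature with raised index, `R^k_i = g^{km} R_{im}`. -/
def RicUp (g ginv : Met n) (k i : Fin n) : Fld n :=
  fun x t => ∑ m, ginv k m x t * Ric g ginv i m x t

/-- Fully lowered Riemann tensor `R_{ijkl} = g_{lm} R^m_{ijk}`. -/
def RiemLow (g ginv : Met n) (i j k l : Fin n) : Fld n :=
  fun x t => ∑ m, g l m x t * Riem g ginv m i j k x t

/-- Covariant derivative of a 1-form: `∇ᵢω_j = ∂ᵢω_j − Γ^p_{ij} ω_p`. -/
def cd1 (g ginv : Met n) (i : Fin n) (ω : Fin n → Fld n) (j : Fin n) : Fld n :=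
  fun x t => spd i (ω j) x t - ∑ p, Gamma g ginv p i j x t * ω p x t

/-- Covariant derivative of a (0,2)-tensor. -/
def cd2 (g ginv : Met n) (i : Fin n) (A : Fin n → Fin n → Fld n) (j k : Fin n) : Fld n :=
  fun x t => spd i (A j k) x t - ∑ p, Gamma g ginv p i j x t * A p k x t
    - ∑ p, Gamma g ginv p i k x t * A j p x t

/-- Covariant derivative of a (1,1)-tensor `T^l_j`:
`∇_a T^l_j = ∂_a T^l_j + Γ^l_{ap} T^p_j − Γ^p_{aj} T^l_p`. -/
def cd11 (g ginv : Met n) (a : Fin n) (T : Fin n → Fin n → Fld n) (l j : Fin n) : Fld n :=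
  fun x t => spd a (T l j) x t + ∑ p, Gamma g ginv l a p x t * T p j x t
    - ∑ p, Gamma g ginv p a j x t * T l p x t

/-- Covariant derivative of a vector field: `∇ᵢV^l = ∂ᵢV^l + Γ^l_{ip} V^p`. -/
def cdVec (g ginv : Met n) (i : Fin n) (V : Fin n → Fld n) (l : Fin n) : Fld n :=
  fun x t => spd i (V l) x t + ∑ p, Gamma g ginv l i p x t * V p x t

/-- Hessian of a scalar: `∇ᵢ∇ⱼu = ∂ᵢ∂ⱼu − Γ^p_{ij}∂_p u`. -/
def hess (g ginv : Met n) (u : Fld n) (i j : Fin n) : Fld n :=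
  fun x t => spd i (spd j u) x t - ∑ p, Gamma g ginv p i j x t * spd p u x t

/-- Gradient (raised differential) of the scalar curvature: `∇^l R = g^{lm}∂_m R`. -/
def gradScal (g ginv : Met n) (l : Fin n) : Fld n :=
  fun x t => ∑ m, ginv l m x t * spd m (Scal g ginv) x t

/-- Rough Laplacian `Δ = g^{pq}∇_p∇_q` on 1-forms. -/
def lap1 (g ginv : Met n) (V : Fin n → Fld n) (j : Fin n) : Fld n :=
  fun x t => ∑ p, ∑ q, ginv p q x t *
    (spd p (cd1 g ginv q V j) x t
     - ∑ m, Gamma g ginv m p q x t * cd1 g ginv m V j x t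
     - ∑ m, Gamma g ginv m p j x t * cd1 g ginv q V m x t)

/-- Rough Laplacian `Δ = g^{pq}∇_p∇_q` on (0,2)-tensors. -/
def lap02 (g ginv : Met n) (A : Fin n → Fin n → Fld n) (i j : Fin n) : Fld n :=
  fun x t => ∑ p, ∑ q, ginv p q x t *
    (spd p (cd2 g ginv q A i j) x t
     - ∑ m, Gamma g ginv m p q x t * cd2 g ginv m A i j x t
     - ∑ m, Gamma g ginv m p i x t * cd2 g ginv q A m j x t
     - ∑ m, Gamma g ginv m p j x t * cd2 g ginv q A i m x t)

/-- Rough Laplacian `Δ = g^{pq}∇_p∇_q` on (1,1)-tensors. -/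
def lap11 (g ginv : Met n) (T : Fin n → Fin n → Fld n) (l i : Fin n) : Fld n :=
  fun x t => ∑ p, ∑ q, ginv p q x t *
    (spd p (cd11 g ginv q T l i) x t
     + ∑ m, Gamma g ginv l p m x t * cd11 g ginv q T m i x t
     - ∑ m, Gamma g ginv m p q x t * cd11 g ginv m T l i x t
     - ∑ m, Gamma g ginv m p i x t * cd11 g ginv q T l m x t)

/-- Laplacian of the scalar curvature `ΔR = g^{ij}(∂ᵢ∂ⱼR − Γ^p_{ij}∂_pR)`. -/
def lapScal (g ginv : Met n) : Fld n :=
  fun x t => ∑ i, ∑ j, ginv i j x t * hess g ginv (Scal g ginv) i j x t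

/-- Squared norm of the Ricci tensor `|Ric|² = g^{ik}g^{jl}R_{ij}R_{kl}`. -/
def normRicSq (g ginv : Met n) : Fld n :=
  fun x t => ∑ i, ∑ j, ∑ k, ∑ l,
    ginv i k x t * ginv j l x t * Ric g ginv i j x t * Ric g ginv k l x t

/-- Hamilton's tensor `P_{ijk} = ∇ᵢR_{jk} − ∇ⱼR_{ik}`. -/
def Pt (g ginv : Met n) (i j k : Fin n) : Fld n :=
  fun x t => cd2 g ginv i (Ric g ginv) j k x t - cd2 g ginv j (Ric g ginv) i k x t

/-- Hamilton's tensor `M_{ij} = ΔR_{ij} − ½∇ᵢ∇ⱼR + 2R_{kijl}R_{kl} − R_{ik}R_{kj}`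
(repeated lower indices contracted with `g^{··}`). -/
def Mt (g ginv : Met n) (i j : Fin n) : Fld n :=
  fun x t => lap02 g ginv (Ric g ginv) i j x t
    - (1/2) * hess g ginv (Scal g ginv) i j x t
    + 2 * ∑ k, ∑ l, ∑ a, ∑ b, ginv k a x t * ginv l b x t *
        RiemLow g ginv k i j l x t * Ric g ginv a b x t
    - ∑ k, ∑ a, ginv k a x t * Ric g ginv i k x t * Ric g ginv a j x t

/-- Hamilton's Harnack quadratic
`Z(U,W) = M_{ij}W_iW_j − 2P_{ijk}U_{ij}W_k + R_{ijkl}U_{ij}U_{lk}`,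
repeated lower indices being contracted with `g^{··}`. -/
def Zharnack (g ginv : Met n) (U : Fin n → Fin n → ℝ) (W : Fin n → ℝ) : Fld n :=
  fun x t =>
    (∑ i, ∑ j, ∑ p, ∑ q, ginv i p x t * ginv j q x t * Mt g ginv i j x t * W p * W q)
    - 2 * (∑ i, ∑ j, ∑ k, ∑ p, ∑ q, ∑ r,
        ginv i p x t * ginv j q x t * ginv k r x t * Pt g ginv i j k x t * U p q * W r)
    + (∑ i, ∑ j, ∑ k, ∑ l, ∑ p, ∑ q, ∑ r, ∑ s,
        ginv i p x t * ginv j q x t * ginv k r x t * ginv l s x t *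
          RiemLow g ginv i j k l x t * U p q * U s r)

/-- `g` (with pointwise inverse `ginv`) is a smooth solution of the Ricci flow
`∂g_{ij}/∂t = −2R_{ij}` on `Ω × [0,T)`. -/
def RicciFlow (Ωs : Set (Fin n → ℝ)) (T : ℝ) (g ginv : Met n) : Prop :=
  IsOpen Ωs ∧ IsConnected Ωs ∧ 0 < T ∧
  (∀ i j, ContDiffOn ℝ (⊤ : ℕ∞) (fun p : (Fin n → ℝ) × ℝ => g i j p.1 p.2)
      (Ωs ×ˢ Set.Ico 0 T)) ∧
  (∀ x ∈ Ωs, ∀ t ∈ Set.Ico (0:ℝ) T,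
    (∀ i j, g i j x t = g j i x t) ∧
    (∀ v : Fin n → ℝ, v ≠ 0 → 0 < ∑ i, ∑ j, g i j x t * v i * v j) ∧
    (∀ i j, ∑ k, g i k x t * ginv k j x t = (if i = j then (1:ℝ) else 0)) ∧
    (∀ i j, tpd (g i j) x t = -2 * Ric g ginv i j x t))

/-! ### Space-time objects -/

/-- A space-time connection on `M̃ = Ω × [0,T)`: the index `0` is time,
the index `i.succ` is the spatial direction `i`. -/
abbrev Con (n : ℕ) := Fin (n+1) → Fin (n+1) → Fin (n+1) → Fld n

/-- Space-time partial derivative: `∂₀ = ∂/∂t` and `∂_{i.succ} = ∂ᵢ`. -/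
def spdT (i : Fin (n+1)) (u : Fld n) : Fld n :=
  Fin.cases (tpd u) (fun j => spd j u) i

/-- Curvature of a space-time connection:
`R̃^l_{ijk} = ∂ᵢΓ̃^l_{jk} − ∂ⱼΓ̃^l_{ik} + Σ_m (Γ̃^m_{jk}Γ̃^l_{im} − Γ̃^m_{ik}Γ̃^l_{jm})`. -/
def RiemT (Γ : Con n) (l i j k : Fin (n+1)) : Fld n :=
  fun x t => spdT i (Γ l j k) x t - spdT j (Γ l i k) x t
    + ∑ m : Fin (n+1), (Γ m j k x t * Γ l i m x t - Γ m i k x t * Γ l j m x t)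

/-- Ricci tensor of a space-time connection: `R̃_{jk} = Σ_p R̃^p_{pjk}`. -/
def RicT (Γ : Con n) (j k : Fin (n+1)) : Fld n :=
  fun x t => ∑ p : Fin (n+1), RiemT Γ p p j k x t

/-- Space-time covariant derivative of a (0,2)-tensor with respect to a connection. -/
def cdT2 (Γ : Con n) (a : Fin (n+1)) (A : Fin (n+1) → Fin (n+1) → Fld n)
    (b c : Fin (n+1)) : Fld n :=
  fun x t => spdT a (A b c) x t - ∑ p : Fin (n+1), Γ p a b x t * A p c x t
    - ∑ p : Fin (n+1), Γ p a c x t * A b p x t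

/-- Space-time covariant derivative of a (1,1)-tensor with respect to a connection. -/
def cdT11 (Γ : Con n) (a : Fin (n+1)) (T : Fin (n+1) → Fin (n+1) → Fld n)
    (l j : Fin (n+1)) : Fld n :=
  fun x t => spdT a (T l j) x t + ∑ p : Fin (n+1), Γ l a p x t * T p j x t
    - ∑ p : Fin (n+1), Γ p a j x t * T l p x t

/-- Time shift of a field by `τ`. -/
def shift (τ : ℝ) (u : Fld n) : Fld n := fun x t => u x (t + τ)

/-- The degenerate inverse metric on space-time (no time shift):
`g̃^{ij} = g^{ij}` for spatial `i,j` and `g̃^{ij} = 0` if `i = 0` or `j = 0`. -/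
def gdegM (ginv : Met n) (i j : Fin (n+1)) : Fld n :=
  Fin.cases (fun _ _ => (0:ℝ))
    (fun i' => Fin.cases (fun _ _ => (0:ℝ)) (fun j' => ginv i' j') j) i

/-- The degenerate inverse metric `g̃_τ` on `M̃_τ`, shifted in time by `τ`. -/
def gdeg (ginv : Met n) (τ : ℝ) (i j : Fin (n+1)) : Fld n :=
  shift τ (gdegM ginv i j)

/-- The Chow–Chu connection `Γ̃_τ` on space-time, defined by (A1)–(A4)
(with time shift `τ`). -/
def GammaA (g ginv : Met n) (τ : ℝ) : Con n :=
  fun k i j =>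
    Fin.cases (fun _ _ => (0:ℝ))
      (fun k' =>
        Fin.cases
          (Fin.cases
            (shift τ (fun x t => -(1/2) * ∑ m, ginv k' m x t * spd m (Scal g ginv) x t))
            (fun j' => shift τ (fun x t => -(RicUp g ginv k' j' x t))) j)
          (fun i' =>
            Fin.cases (shift τ (fun x t => -(RicUp g ginv k' i' x t)))
              (fun j' => shift τ (Gamma g ginv k' i' j')) j) i) k

/-! ### The modified flow -/

/-- `∇ᵢ∇^k f = g^{km} ∇ᵢ∇ₘ f`. -/
def hessUp (g ginv : Met n) (f : Fld n) (i k : Fin n) : Fld n :=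
  fun x t => ∑ m, ginv k m x t * hess g ginv f i m x t

/-- `∇^p f = g^{pq} ∂_q f`. -/
def gradf (ginv : Met n) (f : Fld n) (p : Fin n) : Fld n :=
  fun x t => ∑ q, ginv p q x t * spd q f x t

/-- The potential `−½R + ∂f/∂t − ½|∇f|²`. -/
def Fpot (g ginv : Met n) (f : Fld n) : Fld n :=
  fun x t => -(1/2) * Scal g ginv x t + tpd f x t
    - (1/2) * ∑ p, ∑ q, ginv p q x t * spd p f x t * spd q f x t

/-- The space-time connection `Γ̃` of the modified flow, defined by (D1)–(D4). -/
def GammaD (g ginv : Met n) (f : Fld n) : Con n :=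
  fun k i j =>
    Fin.cases (fun _ _ => (0:ℝ))
      (fun k' =>
        Fin.cases
          (Fin.cases
            (fun x t => ∑ l, ginv k' l x t * spd l (Fpot g ginv f) x t)
            (fun j' => fun x t => -(RicUp g ginv k' j' x t) + hessUp g ginv f j' k' x t) j)
          (fun i' =>
            Fin.cases
              (fun x t => -(RicUp g ginv k' i' x t) + hessUp g ginv f i' k' x t)
              (fun j' => Gamma g ginv k' i' j') j) i) k

/-- Space-time Hessian `∇̃_a∇̃_b f = ∂_a∂_b f − Σ_p Γ̃^p_{ab} ∂_p f` (with `∂₀ = ∂/∂t`). -/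
def hessT (Γ : Con n) (f : Fld n) (a b : Fin (n+1)) : Fld n :=
  fun x t => spdT a (spdT b f) x t - ∑ p : Fin (n+1), Γ p a b x t * spdT p f x t

/-- Space-time Ricci tensor with first index raised by the degenerate metric:
`R̃^k_i = Σ_{p=1}^n g^{kp} R̃_{pi}` for spatial `k`, and `R̃^0_i = 0`. -/
def ricTup (ginv : Met n) (Γ : Con n) (k i : Fin (n+1)) : Fld n :=
  Fin.cases (fun _ _ => (0:ℝ))
    (fun k' => fun x t => ∑ p, ginv k' p x t * RicT Γ p.succ i x t) k

/-- `g` is a smooth solution of the modified Ricci flow with potential `f`: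
`∂g_{ij}/∂t = −2R_{ij} + 2∇ᵢ∇ⱼf` on `Ω × [0,T)`. -/
def ModifiedRicciFlow (Ωs : Set (Fin n → ℝ)) (T : ℝ) (g ginv : Met n) (f : Fld n) : Prop :=
  IsOpen Ωs ∧ IsConnected Ωs ∧ 0 < T ∧
  (∀ i j, ContDiffOn ℝ (⊤ : ℕ∞) (fun p : (Fin n → ℝ) × ℝ => g i j p.1 p.2)
      (Ωs ×ˢ Set.Ico 0 T)) ∧
  ContDiffOn ℝ (⊤ : ℕ∞) (fun p : (Fin n → ℝ) × ℝ => f p.1 p.2) (Ωs ×ˢ Set.Ico 0 T) ∧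
  (∀ x ∈ Ωs, ∀ t ∈ Set.Ico (0:ℝ) T,
    (∀ i j, g i j x t = g j i x t) ∧
    (∀ v : Fin n → ℝ, v ≠ 0 → 0 < ∑ i, ∑ j, g i j x t * v i * v j) ∧
    (∀ i j, ∑ k, g i k x t * ginv k j x t = (if i = j then (1:ℝ) else 0)) ∧
    (∀ i j, tpd (g i j) x t = -2 * Ric g ginv i j x t + 2 * hess g ginv f i j x t))

/-! ### The approximating metrics `g̃_{ε,δ}` -/

/-- The space-time metric `g̃_{ε,δ}`: spatial part `g`, `g̃_{00} = R + ε/(2(t+δ))`,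
mixed components zero. -/
def gE (g ginv : Met n) (ε δ : ℝ) (i j : Fin (n+1)) : Fld n :=
  Fin.cases
    (Fin.cases (fun x t => Scal g ginv x t + ε / (2 * (t + δ)))
      (fun _ => fun _ _ => (0:ℝ)) j)
    (fun i' => Fin.cases (fun _ _ => (0:ℝ)) (fun j' => g i' j') j) i

/-- The (block-diagonal) inverse of `g̃_{ε,δ}`. -/
def gEinv (g ginv : Met n) (ε δ : ℝ) (i j : Fin (n+1)) : Fld n :=
  Fin.cases
    (Fin.cases (fun x t => (Scal g ginv x t + ε / (2 * (t + δ)))⁻¹)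
      (fun _ => fun _ _ => (0:ℝ)) j)
    (fun i' => Fin.cases (fun _ _ => (0:ℝ)) (fun j' => ginv i' j') j) i

/-- The Levi-Civita Christoffel symbols of `g̃_{ε,δ}`:
`Γ̃^k_{ij} = ½ g̃^{kl}(∂ᵢg̃_{jl} + ∂ⱼg̃_{il} − ∂ₗg̃_{ij})`, indices in `0,…,n`. -/
def GammaE (g ginv : Met n) (ε δ : ℝ) : Con n :=
  fun k i j => fun x t => (1/2) * ∑ l : Fin (n+1), gEinv g ginv ε δ k l x t *
    (spdT i (gE g ginv ε δ j l) x t + spdT j (gE g ginv ε δ i l) x t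
      - spdT l (gE g ginv ε δ i j) x t)

end CC

namespace ChowChuAux

open CC

variable {n : ℕ} {U : Set ((Fin n → ℝ) × ℝ)}

/-- joint smoothness of a time-dependent field on `U` -/
def SmF (U : Set ((Fin n → ℝ) × ℝ)) (u : CC.Fld n) : Prop :=
  ContDiffOn ℝ (⊤ : ℕ∞) (fun p : (Fin n → ℝ) × ℝ => u p.1 p.2) U

lemma spd_eq (u : CC.Fld n) (p : (Fin n → ℝ) × ℝ)
    (hu : DifferentiableAt ℝ (fun q : (Fin n → ℝ) × ℝ => u q.1 q.2) p) (i : Fin n) :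
    CC.spd i u p.1 p.2 =
      fderiv ℝ (fun q : (Fin n → ℝ) × ℝ => u q.1 q.2) p (Pi.single i 1, 0) := by
  have hgd : DifferentiableAt ℝ (fun y : Fin n → ℝ => (y, p.2)) p.1 :=
    differentiableAt_id.prodMk (differentiableAt_const _)
  have hcomp : (fun y : Fin n → ℝ => u y p.2)
      = (fun q : (Fin n → ℝ) × ℝ => u q.1 q.2) ∘ (fun y => (y, p.2)) := rfl
  rw [CC.spd, hcomp, fderiv_comp _ hu hgd]
  have h2 : fderiv ℝ (fun y : Fin n → ℝ => (y, p.2)) p.1 =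
      (ContinuousLinearMap.id ℝ (Fin n → ℝ)).prod 0 := by
    rw [DifferentiableAt.fderiv_prodMk differentiableAt_fun_id (differentiableAt_const _)]
    simp [fderiv_id']
  rw [h2]
  simp

lemma smooth_spd (hU : IsOpen U) {u : CC.Fld n} (hu : SmF U u) (i : Fin n) :
    SmF U (CC.spd i u) := by
  have h1 : ContDiffOn ℝ (⊤ : ℕ∞)
      (fun p => fderiv ℝ (fun q : (Fin n → ℝ) × ℝ => u q.1 q.2) p) U :=
    hu.fderiv_of_isOpen hU (by simp)
  exact (h1.clm_apply contDiffOn_const).congr fun p hp =>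
    spd_eq u p ((hu.contDiffAt (hU.mem_nhds hp)).differentiableAt (by simp)) i

lemma sm_prod {ι : Type*} (s : Finset ι) {f : ι → ((Fin n → ℝ) × ℝ) → ℝ}
    (h : ∀ i ∈ s, ContDiffOn ℝ (⊤ : ℕ∞) (f i) U) :
    ContDiffOn ℝ (⊤ : ℕ∞) (fun p => ∏ i ∈ s, f i p) U := by
  classical
  revert h
  refine Finset.induction_on s (fun _ => by simpa using (contDiffOn_const : ContDiffOn ℝ (⊤:ℕ∞) (fun _ => (1:ℝ)) U))
    (fun a s ha ih h => ?_)
  simp only [Finset.prod_insert ha]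
  exact (h _ (Finset.mem_insert_self _ _)).mul (ih fun i hi => h i (Finset.mem_insert_of_mem hi))

lemma sm_det {N : ℕ} (M : ((Fin n → ℝ) × ℝ) → Matrix (Fin N) (Fin N) ℝ)
    (h : ∀ a b, ContDiffOn ℝ (⊤ : ℕ∞) (fun p => M p a b) U) :
    ContDiffOn ℝ (⊤ : ℕ∞) (fun p => (M p).det) U := by
  simp only [Matrix.det_apply']
  exact ContDiffOn.sum fun σ _ => contDiffOn_const.mul (sm_prod _ fun i _ => h (σ i) i)

lemma sm_ginv (g ginv : CC.Met n)
    (hg' : ∀ i j, SmF U (g i j))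
    (hinv : ∀ p ∈ U, ∀ i j : Fin n,
      ∑ k, g i k p.1 p.2 * ginv k j p.1 p.2 = if i = j then (1:ℝ) else 0)
    (i j : Fin n) : SmF U (ginv i j) := by
  classical
  set G : ((Fin n → ℝ) × ℝ) → Matrix (Fin n) (Fin n) ℝ :=
    fun p => Matrix.of fun a b => g a b p.1 p.2 with hG
  have hright : ∀ p ∈ U, G p * (Matrix.of fun a b => ginv a b p.1 p.2) = 1 := by
    intro p hp
    ext a b
    simpa [Matrix.mul_apply, Matrix.one_apply, hG] using hinv p hp a b
  have hdet : ContDiffOn ℝ (⊤ : ℕ∞) (fun p => (G p).det) U :=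
    sm_det _ (fun a b => hg' a b)
  have hdetne : ∀ p ∈ U, (G p).det ≠ 0 := fun p hp =>
    (Matrix.isUnit_det_of_right_inverse (hright p hp)).ne_zero
  have hadj : ContDiffOn ℝ (⊤ : ℕ∞) (fun p => (G p).adjugate i j) U := by
    simp only [Matrix.adjugate_apply]
    apply sm_det
    intro a b
    simp only [Matrix.updateRow_apply]
    rcases eq_or_ne a j with rfl | haj
    · simp only [if_pos rfl]; exact contDiffOn_const
    · simp only [if_neg haj]; exact hg' a b
  have hform : ∀ p ∈ U, ginv i j p.1 p.2 = ((G p).det)⁻¹ * (G p).adjugate i j := by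
    intro p hp
    have h1 : (G p)⁻¹ = Matrix.of fun a b => ginv a b p.1 p.2 :=
      Matrix.inv_eq_right_inv (hright p hp)
    have h2 : (G p)⁻¹ i j = ginv i j p.1 p.2 := by rw [h1]; rfl
    rw [← h2, Matrix.inv_def, Matrix.smul_apply, Ring.inverse_eq_inv', smul_eq_mul]
  exact ((hdet.inv hdetne).mul hadj).congr hform

lemma sm_gamma (hU : IsOpen U) {g ginv : CC.Met n}
    (hg' : ∀ i j, SmF U (g i j)) (hginv' : ∀ i j, SmF U (ginv i j))
    (k i j : Fin n) : SmF U (CC.Gamma g ginv k i j) := by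
  have heq : (fun p : (Fin n → ℝ) × ℝ => CC.Gamma g ginv k i j p.1 p.2)
      = fun p : (Fin n → ℝ) × ℝ => (1/2 : ℝ) * ∑ l, ginv k l p.1 p.2 *
        (CC.spd i (g j l) p.1 p.2 + CC.spd j (g i l) p.1 p.2
          - CC.spd l (g i j) p.1 p.2) := rfl
  rw [SmF, heq]
  exact contDiffOn_const.mul (ContDiffOn.sum fun l _ => (hginv' k l).mul
    (((smooth_spd hU (hg' j l) i).add (smooth_spd hU (hg' i l) j)).sub
      (smooth_spd hU (hg' i j) l)))

lemma sm_riem (hU : IsOpen U) {g ginv : CC.Met n}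
    (hg' : ∀ i j, SmF U (g i j)) (hginv' : ∀ i j, SmF U (ginv i j))
    (l i j k : Fin n) : SmF U (CC.Riem g ginv l i j k) := by
  have hG := fun a b c => sm_gamma hU hg' hginv' a b c
  have heq : (fun p : (Fin n → ℝ) × ℝ => CC.Riem g ginv l i j k p.1 p.2)
      = fun p : (Fin n → ℝ) × ℝ =>
        CC.spd i (CC.Gamma g ginv l j k) p.1 p.2 - CC.spd j (CC.Gamma g ginv l i k) p.1 p.2
        + ∑ m, (CC.Gamma g ginv m j k p.1 p.2 * CC.Gamma g ginv l i m p.1 p.2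
            - CC.Gamma g ginv m i k p.1 p.2 * CC.Gamma g ginv l j m p.1 p.2) := rfl
  rw [SmF, heq]
  exact ((smooth_spd hU (hG l j k) i).sub (smooth_spd hU (hG l i k) j)).add
    (ContDiffOn.sum fun m _ => ((hG m j k).mul (hG l i m)).sub ((hG m i k).mul (hG l j m)))

lemma sm_scal (hU : IsOpen U) {g ginv : CC.Met n}
    (hg' : ∀ i j, SmF U (g i j)) (hginv' : ∀ i j, SmF U (ginv i j)) :
    SmF U (CC.Scal g ginv) := by
  have hRic : ∀ j k, SmF U (CC.Ric g ginv j k) := by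
    intro j k
    have heq : (fun p : (Fin n → ℝ) × ℝ => CC.Ric g ginv j k p.1 p.2)
        = fun p : (Fin n → ℝ) × ℝ => ∑ q, CC.Riem g ginv q q j k p.1 p.2 := rfl
    rw [SmF, heq]
    exact ContDiffOn.sum fun q _ => sm_riem hU hg' hginv' q q j k
  have heq : (fun p : (Fin n → ℝ) × ℝ => CC.Scal g ginv p.1 p.2)
      = fun p : (Fin n → ℝ) × ℝ => ∑ j, ∑ k, ginv j k p.1 p.2 * CC.Ric g ginv j k p.1 p.2 := rfl
  rw [SmF, heq]
  exact ContDiffOn.sum fun j _ => ContDiffOn.sum fun k _ => (hginv' j k).mul (hRic j k)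

lemma diff_t (hU : IsOpen U) {u : CC.Fld n} (hu : SmF U u) {x : Fin n → ℝ} {t : ℝ}
    (hp : (x, t) ∈ U) : DifferentiableAt ℝ (fun s => u x s) t := by
  have h := (hu.contDiffAt (hU.mem_nhds hp)).differentiableAt (by simp)
  have heq : (fun s => u x s)
      = (fun p : (Fin n → ℝ) × ℝ => u p.1 p.2) ∘ (fun s => (x, s)) := rfl
  rw [heq]
  exact h.comp t ((differentiableAt_const _).prodMk differentiableAt_id)

end ChowChuAux

set_option maxHeartbeats 1000000 in
/-- Lemma 4.3 of Chow–Chu. The Levi-Civita Christoffel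
symbols of the space-time metric `g̃_{ε,δ}`, at points where
`K = R + ε/(2(t+δ)) > 0`. -/
theorem approx_christoffel (n : ℕ) (hn : 2 ≤ n)
    (Ωs : Set (Fin n → ℝ)) (T : ℝ)
    (g ginv : CC.Met n) (hg : CC.RicciFlow Ωs T g ginv)
    (ε δ : ℝ) (hε : 0 < ε) (hδ : 0 < δ) :
    ∀ x ∈ Ωs, ∀ t ∈ Set.Ioo (0:ℝ) T,
      0 < CC.Scal g ginv x t + ε / (2 * (t + δ)) →
      -- (1)
      (∀ i j k : Fin n,
        CC.GammaE g ginv ε δ k.succ i.succ j.succ x t = CC.Gamma g ginv k i j x t) ∧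
      -- (2)
      (∀ i j : Fin n,
        CC.GammaE g ginv ε δ 0 i.succ j.succ x t =
          CC.Ric g ginv i j x t / (CC.Scal g ginv x t + ε / (2 * (t + δ)))) ∧
      -- (3)
      (∀ i k : Fin n,
        CC.GammaE g ginv ε δ k.succ i.succ 0 x t = -(CC.RicUp g ginv k i x t) ∧
        CC.GammaE g ginv ε δ k.succ 0 i.succ x t = -(CC.RicUp g ginv k i x t)) ∧
      -- (4)
      (∀ k : Fin n,
        CC.GammaE g ginv ε δ k.succ 0 0 x t = -(1/2) * CC.gradScal g ginv k x t) ∧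
      -- (5)
      (∀ i : Fin n,
        CC.GammaE g ginv ε δ 0 i.succ 0 x t =
          CC.spd i (CC.Scal g ginv) x t / (2 * (CC.Scal g ginv x t + ε / (2 * (t + δ)))) ∧
        CC.GammaE g ginv ε δ 0 0 i.succ x t =
          CC.spd i (CC.Scal g ginv) x t / (2 * (CC.Scal g ginv x t + ε / (2 * (t + δ))))) ∧
      -- (6)
      (CC.GammaE g ginv ε δ 0 0 0 x t =
        ((1/2) * CC.tpd (CC.Scal g ginv) x t - ε / (4 * (t + δ)^2))
          / (CC.Scal g ginv x t + ε / (2 * (t + δ)))) := by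
  classical
  obtain ⟨hΩ, -, hT, hsm, hpt⟩ := hg
  set U : Set ((Fin n → ℝ) × ℝ) := Ωs ×ˢ Set.Ioo 0 T with hUdef
  have hU : IsOpen U := hΩ.prod isOpen_Ioo
  have hUsub : U ⊆ Ωs ×ˢ Set.Ico 0 T :=
    Set.prod_mono_right Set.Ioo_subset_Ico_self
  have hg' : ∀ i j, ChowChuAux.SmF U (g i j) := fun i j => (hsm i j).mono hUsub
  have hmemIco : ∀ p : (Fin n → ℝ) × ℝ, p ∈ U → p.1 ∈ Ωs ∧ p.2 ∈ Set.Ico 0 T := by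
    intro p hp
    exact ⟨hp.1, ⟨le_of_lt hp.2.1, hp.2.2⟩⟩
  have hinvU : ∀ p ∈ U, ∀ i j : Fin n,
      ∑ k, g i k p.1 p.2 * ginv k j p.1 p.2 = if i = j then (1:ℝ) else 0 := by
    intro p hp i j
    exact (hpt p.1 (hmemIco p hp).1 p.2 (hmemIco p hp).2).2.2.1 i j
  have hginv' : ∀ i j, ChowChuAux.SmF U (ginv i j) :=
    ChowChuAux.sm_ginv g ginv hg' hinvU
  have hScal : ChowChuAux.SmF U (CC.Scal g ginv) := ChowChuAux.sm_scal hU hg' hginv'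
  intro x hx t ht hK
  have hxt : (x, t) ∈ U := ⟨hx, ht⟩
  have htIco : t ∈ Set.Ico (0:ℝ) T := ⟨le_of_lt ht.1, ht.2⟩
  have htpd : ∀ i j, CC.tpd (g i j) x t = -2 * CC.Ric g ginv i j x t :=
    (hpt x hx t htIco).2.2.2
  have htδ : (0:ℝ) < t + δ := by linarith [ht.1]
  have hKne : CC.Scal g ginv x t + ε / (2 * (t + δ)) ≠ 0 := ne_of_gt hK
  -- derivatives of the zero field
  have hz1 : ∀ i : Fin n, CC.spd i (fun _ _ => (0:ℝ)) = fun _ _ => (0:ℝ) := by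
    intro i; funext y s; simp [CC.spd]
  have hz0 : CC.tpd (fun (_ : Fin n → ℝ) (_ : ℝ) => (0:ℝ)) = fun _ _ => (0:ℝ) := by
    funext y s; simp [CC.tpd]
  -- spatial derivative of g̃₀₀
  have hsK : ∀ l : Fin n,
      CC.spd l (fun x t => CC.Scal g ginv x t + ε / (2 * (t + δ)))
        = CC.spd l (CC.Scal g ginv) := by
    intro l; funext y s
    simp only [CC.spd]
    rw [fderiv_add_const]
  -- time derivative of g̃₀₀ at (x,t)
  have hdiffS : DifferentiableAt ℝ (fun s => CC.Scal g ginv x s) t :=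
    ChowChuAux.diff_t hU hScal hxt
  have hder2 : HasDerivAt (fun s : ℝ => ε / (2 * (s + δ)))
      ((0 * (2 * (t + δ)) - ε * 2) / (2 * (t + δ)) ^ 2) t := by
    have hd : HasDerivAt (fun s : ℝ => 2 * (s + δ)) 2 t := by
      simpa using (((hasDerivAt_id t).add_const δ).const_mul (2:ℝ))
    exact (hasDerivAt_const t ε).div hd (by positivity)
  have htK : CC.tpd (fun x t => CC.Scal g ginv x t + ε / (2 * (t + δ))) x t
      = CC.tpd (CC.Scal g ginv) x t
        + (0 * (2 * (t + δ)) - ε * 2) / (2 * (t + δ)) ^ 2 := by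
    simp only [CC.tpd]
    rw [deriv_fun_add hdiffS hder2.differentiableAt, hder2.deriv]
  refine ⟨?_, ?_, ?_, ?_, ?_, ?_⟩
  · -- (1)
    intro i j k
    simp [CC.GammaE, CC.gEinv, CC.gE, CC.spdT, Fin.sum_univ_succ, CC.Gamma]
  · -- (2)
    intro i j
    simp only [CC.GammaE, CC.gEinv, CC.gE, CC.spdT, Fin.sum_univ_succ,
      Fin.cases_zero, Fin.cases_succ, hz1, htpd, zero_mul, mul_zero, add_zero,
      zero_add, Finset.sum_const_zero]
    ring
  · -- (3)
    intro i k
    constructor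
    · simp only [CC.GammaE, CC.gEinv, CC.gE, CC.spdT, Fin.sum_univ_succ,
        Fin.cases_zero, Fin.cases_succ, hz1, hz0, htpd, zero_mul, mul_zero,
        add_zero, zero_add, zero_sub, sub_zero, Finset.sum_const_zero]
      rw [CC.RicUp, Finset.mul_sum, ← Finset.sum_neg_distrib]
      exact Finset.sum_congr rfl fun m _ => by ring
    · simp only [CC.GammaE, CC.gEinv, CC.gE, CC.spdT, Fin.sum_univ_succ,
        Fin.cases_zero, Fin.cases_succ, hz1, hz0, htpd, zero_mul, mul_zero,
        add_zero, zero_add, zero_sub, sub_zero, Finset.sum_const_zero]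
      rw [CC.RicUp, Finset.mul_sum, ← Finset.sum_neg_distrib]
      exact Finset.sum_congr rfl fun m _ => by ring
  · -- (4)
    intro k
    simp only [CC.GammaE, CC.gEinv, CC.gE, CC.spdT, Fin.sum_univ_succ,
      Fin.cases_zero, Fin.cases_succ, hz1, hz0, hsK, zero_mul, mul_zero,
      add_zero, zero_add, zero_sub, sub_zero, Finset.sum_const_zero]
    rw [CC.gradScal, Finset.mul_sum, Finset.mul_sum]
    exact Finset.sum_congr rfl fun m _ => by ring
  · -- (5)
    intro i
    constructor
    · simp only [CC.GammaE, CC.gEinv, CC.gE, CC.spdT, Fin.sum_univ_succ,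
        Fin.cases_zero, Fin.cases_succ, hz1, hz0, hsK, zero_mul, mul_zero,
        add_zero, zero_add, zero_sub, sub_zero, Finset.sum_const_zero]
      field_simp
    · simp only [CC.GammaE, CC.gEinv, CC.gE, CC.spdT, Fin.sum_univ_succ,
        Fin.cases_zero, Fin.cases_succ, hz1, hz0, hsK, zero_mul, mul_zero,
        add_zero, zero_add, zero_sub, sub_zero, Finset.sum_const_zero]
      field_simp
  · -- (6)
    simp only [CC.GammaE, CC.gEinv, CC.gE, CC.spdT, Fin.sum_univ_succ,
      Fin.cases_zero, Fin.cases_succ, hz1, hz0, htK, zero_mul, mul_zero,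
      add_zero, zero_add, Finset.sum_const_zero]
    ring
end
end

section
/- Let g be a solution of the Ricci flow on Ω × [0,T) and let ε, δ > 0. At every point of Ω × (0,T) where K := R + ε/(2(t+δ)) > 0, the curvature of the space-time metric g̃_{ε,δ} satisfies: (1) R̃^l_{ijk} = R^l_{ijk} − (R^l_i R_{jk} − R^l_j R_{ik})/K for 1 ≤ i,j,k,l ≤ n; (2) R̃^l_{0jk} = −∇_k R^l_j + ∇^l R_{jk} − ½ (R_{jk} ∇^l R − R^l_j ∂_k R)/K for 1 ≤ j,k,l ≤ n; (3) R̃^l_{i00} = ∂R^l_i/∂t − ½ ∇_i∇^l R − R^m_i R^l_m − [ ( ½ ∂R/∂t − ε/(4(t+δ)²) ) R^l_i − ¼ ∂_i R ∇^l R ]/K for 1 ≤ i,l ≤ n, where ∇^l = g^{lm}∇_m and R^l_i = g^{lm}R_{im}. -/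
/- Common local-coordinate framework for the Chow–Chu space-time
   interpretation of Hamilton's Harnack inequality for the Ricci flow. -/

noncomputable section
open scoped BigOperators
open Filter

noncomputable section
open Filter CC

namespace CCP

variable {n : ℕ}

/-! ### Unconditional derivative lemmas -/

lemma spd_congr {u v : Fld n} {x : Fin n → ℝ} {t : ℝ} {Ω : Set (Fin n → ℝ)}
    (hΩ : IsOpen Ω) (hx : x ∈ Ω) (h : ∀ y ∈ Ω, u y t = v y t) (i : Fin n) :
    spd i u x t = spd i v x t := by
  have : (fun y => u y t) =ᶠ[nhds x] fun y => v y t :=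
    Filter.eventuallyEq_of_mem (hΩ.mem_nhds hx) h
  simp only [spd, this.fderiv_eq]

lemma tpd_congr {u v : Fld n} {x : Fin n → ℝ} {t : ℝ} {I : Set ℝ}
    (hI : IsOpen I) (ht : t ∈ I) (h : ∀ s ∈ I, u x s = v x s) :
    tpd u x t = tpd v x t := by
  have : (fun s => u x s) =ᶠ[nhds t] fun s => v x s :=
    Filter.eventuallyEq_of_mem (hI.mem_nhds ht) h
  simp only [tpd, this.deriv_eq]

lemma spd_const_mul (c : ℝ) (u : Fld n) (i : Fin n) (x : Fin n → ℝ) (t : ℝ) :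
    spd i (fun x t => c * u x t) x t = c * spd i u x t := by
  by_cases hc : c = 0
  · simp [hc, spd]
  by_cases hu : DifferentiableAt ℝ (fun y => u y t) x
  · simp only [spd]
    rw [fderiv_const_mul hu c]; simp
  · have hcu : ¬ DifferentiableAt ℝ (fun y => c * u y t) x := by
      intro h
      have := h.const_mul c⁻¹
      simp only [← mul_assoc, inv_mul_cancel₀ hc, one_mul] at this
      exact hu this
    simp only [spd, fderiv_zero_of_not_differentiableAt hu,
      fderiv_zero_of_not_differentiableAt hcu]
    simp

lemma tpd_const_mul (c : ℝ) (u : Fld n) (x : Fin n → ℝ) (t : ℝ) :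
    tpd (fun x t => c * u x t) x t = c * tpd u x t := by
  by_cases hc : c = 0
  · simp [hc, tpd]
  by_cases hu : DifferentiableAt ℝ (fun s => u x s) t
  · simp only [tpd]
    rw [deriv_const_mul c hu]
  · have hcu : ¬ DifferentiableAt ℝ (fun s => c * u x s) t := by
      intro h
      have := h.const_mul c⁻¹
      simp only [← mul_assoc, inv_mul_cancel₀ hc, one_mul] at this
      exact hu this
    simp only [tpd, deriv_zero_of_not_differentiableAt hu,
      deriv_zero_of_not_differentiableAt hcu, mul_zero]

lemma spd_neg (u : Fld n) (i : Fin n) (x : Fin n → ℝ) (t : ℝ) :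
    spd i (fun x t => -(u x t)) x t = -(spd i u x t) := by
  simp only [spd]; rw [fderiv_fun_neg]; simp

lemma tpd_neg (u : Fld n) (x : Fin n → ℝ) (t : ℝ) :
    tpd (fun x t => -(u x t)) x t = -(tpd u x t) := by
  simp only [tpd]; rw [deriv.fun_neg]

lemma spd_zeroFn (i : Fin n) (x : Fin n → ℝ) (t : ℝ) :
    spd i (fun _ _ => (0:ℝ)) x t = 0 := by
  simp only [spd]
  rw [show (fun y : Fin n → ℝ => (0:ℝ)) = fun _ => (0:ℝ) from rfl, fderiv_fun_const]
  simp

lemma tpd_zeroFn (x : Fin n → ℝ) (t : ℝ) :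
    tpd (fun _ _ => (0:ℝ)) x t = 0 := by
  simp only [tpd, deriv_const]

/-! ### spdT / gE / gEinv component lemmas -/

lemma spdT_zero (u : Fld n) : spdT (0 : Fin (n+1)) u = tpd u := by
  simp [spdT]

lemma spdT_succ (i : Fin n) (u : Fld n) : spdT i.succ u = spd i u := by
  simp [spdT]

variable {g ginv : Met n} {ε δ : ℝ}

lemma gE_zero_zero (g ginv : Met n) (ε δ : ℝ) :
    gE g ginv ε δ 0 0 = fun x t => Scal g ginv x t + ε / (2 * (t + δ)) := by
  simp [gE]

lemma gE_zero_succ (g ginv : Met n) (ε δ : ℝ) (j : Fin n) :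
    gE g ginv ε δ 0 j.succ = fun _ _ => (0:ℝ) := by simp [gE]

lemma gE_succ_zero (g ginv : Met n) (ε δ : ℝ) (i : Fin n) :
    gE g ginv ε δ i.succ 0 = fun _ _ => (0:ℝ) := by simp [gE]

lemma gE_succ_succ (g ginv : Met n) (ε δ : ℝ) (i j : Fin n) :
    gE g ginv ε δ i.succ j.succ = g i j := by simp [gE]

lemma gEinv_zero_zero (g ginv : Met n) (ε δ : ℝ) :
    gEinv g ginv ε δ 0 0 = fun x t => (Scal g ginv x t + ε / (2 * (t + δ)))⁻¹ := by
  simp [gEinv]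

lemma gEinv_zero_succ (g ginv : Met n) (ε δ : ℝ) (j : Fin n) :
    gEinv g ginv ε δ 0 j.succ = fun _ _ => (0:ℝ) := by simp [gEinv]

lemma gEinv_succ_zero (g ginv : Met n) (ε δ : ℝ) (i : Fin n) :
    gEinv g ginv ε δ i.succ 0 = fun _ _ => (0:ℝ) := by simp [gEinv]

lemma gEinv_succ_succ (g ginv : Met n) (ε δ : ℝ) (i j : Fin n) :
    gEinv g ginv ε δ i.succ j.succ = ginv i j := by simp [gEinv]

end CCP
end


noncomputable section
open Filter CC CCP

namespace CCP

variable {n : ℕ}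

/-- Joint smoothness of a field on a set. -/
def SmOn (U : Set ((Fin n → ℝ) × ℝ)) (u : Fld n) : Prop :=
  ContDiffOn ℝ (⊤ : ℕ∞) (fun p : (Fin n → ℝ) × ℝ => u p.1 p.2) U

variable {U : Set ((Fin n → ℝ) × ℝ)} {u v : Fld n}

lemma SmOn.const (U : Set ((Fin n → ℝ) × ℝ)) (c : ℝ) : SmOn U (fun _ _ => c) :=
  contDiffOn_const

lemma SmOn.add (hu : SmOn U u) (hv : SmOn U v) :
    SmOn U (fun x t => u x t + v x t) := ContDiffOn.add hu hv

lemma SmOn.sub (hu : SmOn U u) (hv : SmOn U v) :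
    SmOn U (fun x t => u x t - v x t) := ContDiffOn.sub hu hv

lemma SmOn.mul (hu : SmOn U u) (hv : SmOn U v) :
    SmOn U (fun x t => u x t * v x t) := ContDiffOn.mul hu hv

lemma SmOn.neg (hu : SmOn U u) : SmOn U (fun x t => -(u x t)) := ContDiffOn.neg hu

lemma SmOn.constMul (hu : SmOn U u) (c : ℝ) : SmOn U (fun x t => c * u x t) :=
  ContDiffOn.mul (SmOn.const U c) hu

lemma SmOn.sum {ι : Type*} {s : Finset ι} {f : ι → Fld n}
    (h : ∀ i ∈ s, SmOn U (f i)) : SmOn U (fun x t => ∑ i ∈ s, f i x t) := by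
  classical
  induction s using Finset.induction_on with
  | empty => simpa using SmOn.const U 0
  | @insert a s' hx ih =>
      have := ContDiffOn.add (h a (Finset.mem_insert_self a s'))
        (ih fun i hi => h i (Finset.mem_insert_of_mem hi))
      simpa [SmOn, Finset.sum_insert hx] using this

lemma SmOn.congr (hu : SmOn U u) (hU : IsOpen U)
    (h : ∀ p ∈ U, v p.1 p.2 = u p.1 p.2) : SmOn U v :=
  ContDiffOn.congr hu h

lemma SmOn.inv (hu : SmOn U u) (h : ∀ p ∈ U, u p.1 p.2 ≠ 0) :
    SmOn U (fun x t => (u x t)⁻¹) := ContDiffOn.inv hu h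

/-- slice derivative in `x` of a jointly differentiable function -/
lemma fderiv_slice_x {G : Type*} [NormedAddCommGroup G] [NormedSpace ℝ G]
    {F : (Fin n → ℝ) × ℝ → G} {x : Fin n → ℝ} {t : ℝ}
    (h : DifferentiableAt ℝ F (x, t)) (v : Fin n → ℝ) :
    fderiv ℝ (fun y => F (y, t)) x v = fderiv ℝ F (x, t) (v, 0) := by
  have hemb : HasFDerivAt (fun y : Fin n → ℝ => (y, t))
      (ContinuousLinearMap.inl ℝ (Fin n → ℝ) ℝ) x :=
    (hasFDerivAt_id x).prodMk (hasFDerivAt_const t x)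
  have h2 : fderiv ℝ (fun y => F (y, t)) x
      = (fderiv ℝ F (x, t)).comp (ContinuousLinearMap.inl ℝ (Fin n → ℝ) ℝ) := by
    exact (h.hasFDerivAt.comp x hemb).fderiv
  rw [h2]; rfl

lemma deriv_slice_t {G : Type*} [NormedAddCommGroup G] [NormedSpace ℝ G]
    {F : (Fin n → ℝ) × ℝ → G} {x : Fin n → ℝ} {t : ℝ}
    (h : DifferentiableAt ℝ F (x, t)) :
    deriv (fun s => F (x, s)) t = fderiv ℝ F (x, t) (0, 1) := by
  have hemb : HasFDerivAt (fun s : ℝ => ((x : Fin n → ℝ), s))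
      (ContinuousLinearMap.inr ℝ (Fin n → ℝ) ℝ) t :=
    (hasFDerivAt_const x t).prodMk (hasFDerivAt_id t)
  have hcomp := h.hasFDerivAt.comp t hemb
  have h2 : deriv (fun s => F (x, s)) t
      = ((fderiv ℝ F (x, t)).comp (ContinuousLinearMap.inr ℝ (Fin n → ℝ) ℝ)) 1 := by
    exact hcomp.hasDerivAt.deriv
  rw [h2]; rfl

lemma SmOn.contDiffAt (hu : SmOn U u) (hU : IsOpen U) {x : Fin n → ℝ} {t : ℝ}
    (hp : (x, t) ∈ U) :
    ContDiffAt ℝ (⊤ : ℕ∞) (fun p : (Fin n → ℝ) × ℝ => u p.1 p.2) (x, t) :=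
  ContDiffOn.contDiffAt hu (hU.mem_nhds hp)

lemma SmOn.diffAt (hu : SmOn U u) (hU : IsOpen U) {x : Fin n → ℝ} {t : ℝ}
    (hp : (x, t) ∈ U) :
    DifferentiableAt ℝ (fun p : (Fin n → ℝ) × ℝ => u p.1 p.2) (x, t) :=
  (hu.contDiffAt hU hp).differentiableAt (by simp)

lemma SmOn.diff_x (hu : SmOn U u) (hU : IsOpen U) {x : Fin n → ℝ} {t : ℝ}
    (hp : (x, t) ∈ U) : DifferentiableAt ℝ (fun y => u y t) x := by
  have hemb : DifferentiableAt ℝ (fun y : Fin n → ℝ => (y, t)) x :=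
    (differentiableAt_id).prodMk (differentiableAt_const t)
  exact (hu.diffAt hU hp).comp x hemb

lemma SmOn.diff_t (hu : SmOn U u) (hU : IsOpen U) {x : Fin n → ℝ} {t : ℝ}
    (hp : (x, t) ∈ U) : DifferentiableAt ℝ (fun s => u x s) t := by
  have hemb : DifferentiableAt ℝ (fun s : ℝ => ((x : Fin n → ℝ), s)) t :=
    (differentiableAt_const x).prodMk differentiableAt_id
  exact (hu.diffAt hU hp).comp t hemb

lemma spd_eq_fderiv (hu : SmOn U u) (hU : IsOpen U) {x : Fin n → ℝ} {t : ℝ}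
    (hp : (x, t) ∈ U) (i : Fin n) :
    spd i u x t = fderiv ℝ (fun p : (Fin n → ℝ) × ℝ => u p.1 p.2) (x, t)
      (Pi.single i 1, 0) := by
  simp only [spd]
  exact fderiv_slice_x (hu.diffAt hU hp) _

lemma tpd_eq_fderiv (hu : SmOn U u) (hU : IsOpen U) {x : Fin n → ℝ} {t : ℝ}
    (hp : (x, t) ∈ U) :
    tpd u x t = fderiv ℝ (fun p : (Fin n → ℝ) × ℝ => u p.1 p.2) (x, t) (0, 1) := by
  simp only [tpd]
  exact deriv_slice_t (hu.diffAt hU hp)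

lemma smOn_fderiv_apply (hu : SmOn U u) (hU : IsOpen U)
    (w : (Fin n → ℝ) × ℝ) :
    ContDiffOn ℝ (⊤ : ℕ∞)
      (fun p => fderiv ℝ (fun q : (Fin n → ℝ) × ℝ => u q.1 q.2) p w) U := by
  have h1 : ContDiffOn ℝ (⊤ : ℕ∞)
      (fderiv ℝ (fun q : (Fin n → ℝ) × ℝ => u q.1 q.2)) U := by
    apply hu.fderiv_of_isOpen hU
    exact le_of_eq (by rfl)
  exact h1.clm_apply contDiffOn_const

lemma SmOn.spd (hu : SmOn U u) (hU : IsOpen U) (i : Fin n) : SmOn U (spd i u) :=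
  (smOn_fderiv_apply hu hU (Pi.single i 1, 0)).congr
    (fun p hp => by
      have := spd_eq_fderiv hu hU (x := p.1) (t := p.2) (by simpa using hp) i
      simpa using this)

lemma SmOn.tpd (hu : SmOn U u) (hU : IsOpen U) : SmOn U (tpd u) :=
  (smOn_fderiv_apply hu hU (0, 1)).congr
    (fun p hp => by
      have := tpd_eq_fderiv hu hU (x := p.1) (t := p.2) (by simpa using hp)
      simpa using this)

end CCP
end


noncomputable section
open Filter CC CCP

namespace CCP

variable {n : ℕ} {U : Set ((Fin n → ℝ) × ℝ)} {u v : Fld n}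
  {x : Fin n → ℝ} {t : ℝ}

/-! ### pointwise derivative arithmetic -/

lemma spd_add (i : Fin n) (hu : DifferentiableAt ℝ (fun y => u y t) x)
    (hv : DifferentiableAt ℝ (fun y => v y t) x) :
    spd i (fun x t => u x t + v x t) x t = spd i u x t + spd i v x t := by
  simp only [spd]
  rw [fderiv_fun_add hu hv]; rfl

lemma spd_sub (i : Fin n) (hu : DifferentiableAt ℝ (fun y => u y t) x)
    (hv : DifferentiableAt ℝ (fun y => v y t) x) :
    spd i (fun x t => u x t - v x t) x t = spd i u x t - spd i v x t := by
  simp only [spd]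
  rw [fderiv_fun_sub hu hv]; rfl

lemma spd_mul (i : Fin n) (hu : DifferentiableAt ℝ (fun y => u y t) x)
    (hv : DifferentiableAt ℝ (fun y => v y t) x) :
    spd i (fun x t => u x t * v x t) x t
      = spd i u x t * v x t + u x t * spd i v x t := by
  simp only [spd]
  rw [fderiv_fun_mul hu hv]
  simp only [ContinuousLinearMap.add_apply, ContinuousLinearMap.smul_apply, smul_eq_mul]
  ring

lemma spd_sum (i : Fin n) {ι : Type*} {s : Finset ι} {f : ι → Fld n}
    (h : ∀ m ∈ s, DifferentiableAt ℝ (fun y => f m y t) x) :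
    spd i (fun x t => ∑ m ∈ s, f m x t) x t = ∑ m ∈ s, spd i (f m) x t := by
  simp only [spd]
  rw [fderiv_fun_sum h]
  simp only [ContinuousLinearMap.coe_sum', Finset.sum_apply]

lemma tpd_add (hu : DifferentiableAt ℝ (fun s => u x s) t)
    (hv : DifferentiableAt ℝ (fun s => v x s) t) :
    tpd (fun x t => u x t + v x t) x t = tpd u x t + tpd v x t := by
  simp only [tpd]; rw [deriv_fun_add hu hv]

lemma tpd_sub (hu : DifferentiableAt ℝ (fun s => u x s) t)
    (hv : DifferentiableAt ℝ (fun s => v x s) t) :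
    tpd (fun x t => u x t - v x t) x t = tpd u x t - tpd v x t := by
  simp only [tpd]; rw [deriv_fun_sub hu hv]

lemma tpd_mul (hu : DifferentiableAt ℝ (fun s => u x s) t)
    (hv : DifferentiableAt ℝ (fun s => v x s) t) :
    tpd (fun x t => u x t * v x t) x t
      = tpd u x t * v x t + u x t * tpd v x t := by
  simp only [tpd]; rw [deriv_fun_mul hu hv]

lemma tpd_sum {ι : Type*} {s : Finset ι} {f : ι → Fld n}
    (h : ∀ m ∈ s, DifferentiableAt ℝ (fun s' => f m x s') t) :
    tpd (fun x t => ∑ m ∈ s, f m x t) x t = ∑ m ∈ s, tpd (f m) x t := by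
  simp only [tpd]
  rw [deriv_fun_sum h]

/-! ### Clairaut -/

lemma tpd_spd_comm (hu : SmOn U u) (hU : IsOpen U) (hp : (x, t) ∈ U) (i : Fin n) :
    tpd (spd i u) x t = spd i (tpd u) x t := by
  classical
  set F : (Fin n → ℝ) × ℝ → ℝ := fun p => u p.1 p.2 with hF
  set D := fderiv ℝ F with hDdef
  have hD : ContDiffOn ℝ (⊤ : ℕ∞) D U := hu.fderiv_of_isOpen hU (le_of_eq (by rfl))
  have hDAt : DifferentiableAt ℝ D (x, t) :=
    (hD.contDiffAt (hU.mem_nhds hp)).differentiableAt (by simp)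
  have hsym : IsSymmSndFDerivAt ℝ F (x, t) :=
    (hu.contDiffAt hU hp).isSymmSndFDerivAt (by rw [minSmoothness_of_isRCLikeNormedField]; exact WithTop.coe_le_coe.2 le_top)
  -- LHS
  have hI : IsOpen {s : ℝ | ((x : Fin n → ℝ), s) ∈ U} :=
    hU.preimage (by fun_prop)
  have l1 : tpd (spd i u) x t
      = deriv (fun s => D (x, s) (Pi.single i 1, 0)) t := by
    apply tpd_congr hI hp
    intro s hs
    exact spd_eq_fderiv hu hU hs i
  have hΦ : HasDerivAt (fun s => D (x, s)) (fderiv ℝ D (x, t) (0, 1)) t := by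
    have hemb : HasFDerivAt (fun s : ℝ => ((x : Fin n → ℝ), s))
        (ContinuousLinearMap.inr ℝ (Fin n → ℝ) ℝ) t :=
      (hasFDerivAt_const x t).prodMk (hasFDerivAt_id t)
    have := (hDAt.hasFDerivAt.comp t hemb).hasDerivAt
    exact this
  have l2 : deriv (fun s => D (x, s) (Pi.single i 1, 0)) t
      = fderiv ℝ D (x, t) (0, 1) (Pi.single i 1, 0) := by
    have := hΦ.clm_apply (hasDerivAt_const t ((Pi.single i 1 : Fin n → ℝ), (0:ℝ)))
    simpa using this.deriv
  -- RHS
  have hIx : IsOpen {y : Fin n → ℝ | (y, t) ∈ U} := hU.preimage (by fun_prop)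
  have r1 : spd i (tpd u) x t
      = fderiv ℝ (fun y => D (y, t) (0, 1)) x (Pi.single i 1) := by
    simp only [spd]
    congr 1
    apply Filter.EventuallyEq.fderiv_eq
    filter_upwards [hIx.mem_nhds hp] with y hy
    exact tpd_eq_fderiv hu hU hy
  have hΨ : HasFDerivAt (fun y => D (y, t))
      ((fderiv ℝ D (x, t)).comp (ContinuousLinearMap.inl ℝ (Fin n → ℝ) ℝ)) x := by
    have hemb : HasFDerivAt (fun y : Fin n → ℝ => (y, t))
        (ContinuousLinearMap.inl ℝ (Fin n → ℝ) ℝ) x :=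
      (hasFDerivAt_id x).prodMk (hasFDerivAt_const t x)
    exact hDAt.hasFDerivAt.comp x hemb
  have r2 : fderiv ℝ (fun y => D (y, t) (0, 1)) x (Pi.single i 1)
      = fderiv ℝ D (x, t) (Pi.single i 1, 0) (0, 1) := by
    have := hΨ.clm_apply (hasFDerivAt_const ((0 : Fin n → ℝ), (1:ℝ)) x)
    rw [this.fderiv]
    simp
  rw [l1, l2, r1, r2]
  exact hsym.eq _ _

end CCP
end


noncomputable section
open Filter CC CCP

namespace CCP

variable {n : ℕ} {U : Set ((Fin n → ℝ) × ℝ)}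

lemma SmOn.prod {ι : Type*} {s : Finset ι} {f : ι → Fld n}
    (h : ∀ i ∈ s, SmOn U (f i)) : SmOn U (fun x t => ∏ i ∈ s, f i x t) := by
  classical
  induction s using Finset.induction_on with
  | empty => simpa using SmOn.const U 1
  | @insert a s' hx ih =>
      have := ContDiffOn.mul (h a (Finset.mem_insert_self a s'))
        (ih fun i hi => h i (Finset.mem_insert_of_mem hi))
      simpa [SmOn, Finset.prod_insert hx] using this

variable {Ωs : Set (Fin n → ℝ)} {T : ℝ} {g ginv : Met n}

/-- the space-time domain -/
def dom (Ωs : Set (Fin n → ℝ)) (T : ℝ) : Set ((Fin n → ℝ) × ℝ) :=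
  Ωs ×ˢ Set.Ioo 0 T

/-- the metric as a matrix-valued function -/
def Mx (g : Met n) (p : (Fin n → ℝ) × ℝ) : Matrix (Fin n) (Fin n) ℝ :=
  Matrix.of fun a b => g a b p.1 p.2

section RF
variable (hg : RicciFlow Ωs T g ginv)
include hg

lemma dom_open : IsOpen (dom Ωs T) := hg.1.prod isOpen_Ioo

lemma dom_sub : dom Ωs T ⊆ Ωs ×ˢ Set.Ico 0 T := by
  intro p hp
  exact ⟨hp.1, ⟨le_of_lt hp.2.1, hp.2.2⟩⟩

lemma mem_dom {x : Fin n → ℝ} {t : ℝ} (hx : x ∈ Ωs) (ht : t ∈ Set.Ioo (0:ℝ) T) :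
    (x, t) ∈ dom Ωs T := ⟨hx, ht⟩

lemma ptfacts {x : Fin n → ℝ} {t : ℝ} (hx : x ∈ Ωs) (ht : t ∈ Set.Ico (0:ℝ) T) :
    (∀ i j, g i j x t = g j i x t) ∧
    (∀ v : Fin n → ℝ, v ≠ 0 → 0 < ∑ i, ∑ j, g i j x t * v i * v j) ∧
    (∀ i j, ∑ k, g i k x t * ginv k j x t = (if i = j then (1:ℝ) else 0)) ∧
    (∀ i j, tpd (g i j) x t = -2 * Ric g ginv i j x t) :=
  hg.2.2.2.2 x hx t ht

lemma smg (i j : Fin n) : SmOn (dom Ωs T) (g i j) :=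
  (hg.2.2.2.1 i j).mono (dom_sub hg)

lemma hMinv {p : (Fin n → ℝ) × ℝ} (hp : p ∈ dom Ωs T) :
    Mx g p * Mx ginv p = 1 := by
  have h := (ptfacts hg hp.1 ⟨le_of_lt hp.2.1, hp.2.2⟩).2.2.1
  ext i j
  simp only [Matrix.mul_apply, Mx, Matrix.of_apply, Matrix.one_apply]
  exact h i j

lemma hdet_ne {p : (Fin n → ℝ) × ℝ} (hp : p ∈ dom Ωs T) : (Mx g p).det ≠ 0 := by
  have := hMinv hg hp
  have h1 : (Mx g p).det * (Mx ginv p).det = 1 := by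
    rw [← Matrix.det_mul, this, Matrix.det_one]
  intro h; rw [h, zero_mul] at h1; exact zero_ne_one h1

lemma hginv_eq {p : (Fin n → ℝ) × ℝ} (hp : p ∈ dom Ωs T) (a b : Fin n) :
    ginv a b p.1 p.2 = (Mx g p).det⁻¹ * (Mx g p).adjugate a b := by
  have h1 : (Mx g p)⁻¹ = Mx ginv p := Matrix.inv_eq_right_inv (hMinv hg hp)
  have h2 : (Mx g p)⁻¹ a b = ginv a b p.1 p.2 := by rw [h1]; rfl
  rw [← h2, Matrix.inv_def, Matrix.smul_apply, Ring.inverse_eq_inv', smul_eq_mul]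

lemma smdet : SmOn (dom Ωs T) (fun x t => (Mx g (x, t)).det) := by
  have : ∀ x t, (Mx g (x, t)).det
      = ∑ σ : Equiv.Perm (Fin n), ((Equiv.Perm.sign σ : ℤ) : ℝ) * ∏ i, g (σ i) i x t := by
    intro x t
    rw [Matrix.det_apply]
    congr 1; funext σ
    rw [Units.smul_def, zsmul_eq_mul]; rfl
  have h2 : SmOn (dom Ωs T)
      (fun x t => ∑ σ : Equiv.Perm (Fin n),
        ((Equiv.Perm.sign σ : ℤ) : ℝ) * ∏ i, g (σ i) i x t) :=
    SmOn.sum fun σ _ => SmOn.constMul (SmOn.prod fun i _ => smg hg _ _) _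
  exact h2.congr (dom_open hg) fun p _ => by rw [this]

lemma smadj (a b : Fin n) : SmOn (dom Ωs T) (fun x t => (Mx g (x, t)).adjugate a b) := by
  have : ∀ x t, (Mx g (x, t)).adjugate a b
      = ∑ σ : Equiv.Perm (Fin n), ((Equiv.Perm.sign σ : ℤ) : ℝ) *
          ∏ i, (if σ i = b then (Pi.single a 1 : Fin n → ℝ) i else g (σ i) i x t) := by
    intro x t
    rw [Matrix.adjugate_apply, Matrix.det_apply]
    congr 1; funext σ
    rw [Units.smul_def, zsmul_eq_mul]
    congr 1
    congr 1; funext i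
    rw [Matrix.updateRow_apply]; rfl
  have h2 : SmOn (dom Ωs T)
      (fun x t => ∑ σ : Equiv.Perm (Fin n), ((Equiv.Perm.sign σ : ℤ) : ℝ) *
          ∏ i, (if σ i = b then (Pi.single a 1 : Fin n → ℝ) i else g (σ i) i x t)) := by
    refine SmOn.sum fun σ _ => SmOn.constMul (SmOn.prod fun i _ => ?_) _
    by_cases hsi : σ i = b
    · simpa [hsi] using SmOn.const (dom Ωs T) ((Pi.single a 1 : Fin n → ℝ) i)
    · simpa [hsi] using smg hg (σ i) i
  exact h2.congr (dom_open hg) fun p _ => by rw [this]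

lemma smginv (a b : Fin n) : SmOn (dom Ωs T) (ginv a b) := by
  have h := ((smdet hg).inv (fun p hp => hdet_ne hg hp)).mul (smadj hg a b)
  exact h.congr (dom_open hg) fun p hp => hginv_eq hg hp a b

lemma smGamma (k i j : Fin n) : SmOn (dom Ωs T) (Gamma g ginv k i j) := by
  refine SmOn.constMul (SmOn.sum fun l _ => (smginv hg k l).mul ?_) _
  exact (((smg hg j l).spd (dom_open hg) i).add ((smg hg i l).spd (dom_open hg) j)).sub
    ((smg hg i j).spd (dom_open hg) l)

lemma smRiem (l i j k : Fin n) : SmOn (dom Ωs T) (Riem g ginv l i j k) := by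
  refine SmOn.add (SmOn.sub ((smGamma hg l j k).spd (dom_open hg) i)
    ((smGamma hg l i k).spd (dom_open hg) j)) (SmOn.sum fun m _ => ?_)
  exact ((smGamma hg m j k).mul (smGamma hg l i m)).sub
    ((smGamma hg m i k).mul (smGamma hg l j m))

lemma smRic (j k : Fin n) : SmOn (dom Ωs T) (Ric g ginv j k) :=
  SmOn.sum fun p _ => smRiem hg p p j k

lemma smScal : SmOn (dom Ωs T) (Scal g ginv) :=
  SmOn.sum fun j _ => SmOn.sum fun k _ => (smginv hg j k).mul (smRic hg j k)

lemma smRicUp (k i : Fin n) : SmOn (dom Ωs T) (RicUp g ginv k i) :=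
  SmOn.sum fun m _ => (smginv hg k m).mul (smRic hg i m)

lemma smgradScal (l : Fin n) : SmOn (dom Ωs T) (gradScal g ginv l) :=
  SmOn.sum fun m _ => (smginv hg l m).mul ((smScal hg).spd (dom_open hg) m)

end RF
end CCP
end


noncomputable section
open Filter CC CCP

namespace CCP

variable {n : ℕ} {Ωs : Set (Fin n → ℝ)} {T : ℝ} {g ginv : Met n}
  {x : Fin n → ℝ} {t : ℝ}

lemma tpd_constFn (c : ℝ) (x : Fin n → ℝ) (t : ℝ) :
    tpd (fun _ _ => c) x t = 0 := by simp [tpd]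

lemma spd_constFn (c : ℝ) (i : Fin n) (x : Fin n → ℝ) (t : ℝ) :
    spd i (fun _ _ => c) x t = 0 := by
  simp only [spd]
  rw [show (fun y : Fin n → ℝ => c) = fun _ => c from rfl, fderiv_fun_const]
  simp

section PT
variable (hg : RicciFlow Ωs T g ginv) (hx : x ∈ Ωs) (ht : t ∈ Set.Ioo (0:ℝ) T)
include hg hx ht

lemma hIco : t ∈ Set.Ico (0:ℝ) T := ⟨le_of_lt ht.1, ht.2⟩

lemma flow_pt (i j : Fin n) : tpd (g i j) x t = -2 * Ric g ginv i j x t :=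
  (ptfacts hg hx (hIco hg hx ht)).2.2.2 i j

lemma gsym_pt (i j : Fin n) : g i j x t = g j i x t :=
  (ptfacts hg hx (hIco hg hx ht)).1 i j

lemma delta_right (i j : Fin n) :
    ∑ k, g i k x t * ginv k j x t = (if i = j then (1:ℝ) else 0) :=
  (ptfacts hg hx (hIco hg hx ht)).2.2.1 i j

lemma Minv_pt : (Mx g (x, t))⁻¹ = Mx ginv (x, t) :=
  Matrix.inv_eq_right_inv (hMinv hg (mem_dom hg hx ht))

lemma delta_left (i j : Fin n) :
    ∑ k, ginv i k x t * g k j x t = (if i = j then (1:ℝ) else 0) := by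
  have h1 : Mx ginv (x, t) * Mx g (x, t) = 1 :=
    mul_eq_one_comm.1 (hMinv hg (mem_dom hg hx ht))
  have := congrArg (fun M => M i j) h1
  simpa [Matrix.mul_apply, Mx, Matrix.one_apply] using this

lemma ginvsym_pt (i j : Fin n) : ginv i j x t = ginv j i x t := by
  have hMsym : (Mx g (x, t)).transpose = Mx g (x, t) := by
    ext a b; exact gsym_pt hg hx ht b a
  have h1 : (Mx ginv (x, t)).transpose = Mx ginv (x, t) := by
    rw [← Minv_pt hg hx ht, Matrix.transpose_nonsing_inv, hMsym]
  have := congrArg (fun M => M i j) h1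
  have h2 : ginv j i x t = ginv i j x t := by
    simpa [Matrix.transpose_apply, Mx] using this
  exact h2.symm

lemma Dg_sym (a i j : Fin n) : spd a (g i j) x t = spd a (g j i) x t := by
  refine spd_congr hg.1 hx (fun y hy => ?_) a
  exact (ptfacts hg hy (hIco hg hx ht)).1 i j

lemma Gamma_sym (k i j : Fin n) : Gamma g ginv k i j x t = Gamma g ginv k j i x t := by
  simp only [Gamma]
  congr 1
  refine Finset.sum_congr rfl fun l _ => ?_
  rw [Dg_sym hg hx ht l i j]
  ring

lemma Ric_sym (i j : Fin n) : Ric g ginv i j x t = Ric g ginv j i x t := by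
  have h1 : tpd (g i j) x t = tpd (g j i) x t := by
    refine tpd_congr isOpen_Ioo ht (fun s hs => ?_)
    exact (ptfacts hg hx ⟨le_of_lt hs.1, hs.2⟩).1 i j
  have h2 := flow_pt hg hx ht i j
  have h3 := flow_pt hg hx ht j i
  rw [h2, h3] at h1
  linarith

/-- time derivative of the inverse metric -/
lemma tpd_ginv (a b : Fin n) :
    tpd (ginv a b) x t
      = 2 * ∑ m, ∑ k, ginv a m x t * Ric g ginv m k x t * ginv k b x t := by
  have hOp := dom_open hg
  have hdm := mem_dom hg hx ht
  have key : ∀ i j : Fin n,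
      ∑ k, (tpd (g i k) x t * ginv k j x t + g i k x t * tpd (ginv k j) x t) = 0 := by
    intro i j
    have h0 : tpd (fun x t => ∑ k, g i k x t * ginv k j x t) x t = 0 := by
      rw [tpd_congr (v := fun _ _ => if i = j then (1:ℝ) else 0) isOpen_Ioo ht
        (fun s hs => (ptfacts hg hx ⟨le_of_lt hs.1, hs.2⟩).2.2.1 i j)]
      exact tpd_constFn _ x t
    rw [tpd_sum (fun k _ => ((smg hg i k).mul (smginv hg k j)).diff_t hOp hdm)] at h0
    rw [← h0]
    refine Finset.sum_congr rfl fun k _ => ?_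
    rw [tpd_mul ((smg hg i k).diff_t hOp hdm) ((smginv hg k j).diff_t hOp hdm)]
  have solve : ∀ k j : Fin n,
      ∑ k', g k k' x t * tpd (ginv k' j) x t
        = - ∑ k', tpd (g k k') x t * ginv k' j x t := by
    intro k j
    have := key k j
    rw [Finset.sum_add_distrib] at this
    linarith
  calc tpd (ginv a b) x t
      = ∑ k, (if a = k then (1:ℝ) else 0) * tpd (ginv k b) x t := by simp
    _ = ∑ k, (∑ m, ginv a m x t * g m k x t) * tpd (ginv k b) x t := by
        refine Finset.sum_congr rfl fun k _ => ?_
        rw [delta_left hg hx ht]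
    _ = ∑ k, ∑ m, ginv a m x t * g m k x t * tpd (ginv k b) x t := by
        refine Finset.sum_congr rfl fun k _ => ?_
        rw [Finset.sum_mul]
    _ = ∑ m, ∑ k, ginv a m x t * g m k x t * tpd (ginv k b) x t := by
        exact Finset.sum_comm
    _ = ∑ m, ginv a m x t * ∑ k, g m k x t * tpd (ginv k b) x t := by
        refine Finset.sum_congr rfl fun m _ => ?_
        rw [Finset.mul_sum]
        refine Finset.sum_congr rfl fun k _ => ?_
        ring
    _ = ∑ m, ginv a m x t * (- ∑ k, tpd (g m k) x t * ginv k b x t) := by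
        refine Finset.sum_congr rfl fun m _ => ?_
        rw [solve]
    _ = 2 * ∑ m, ∑ k, ginv a m x t * Ric g ginv m k x t * ginv k b x t := by
        rw [Finset.mul_sum]
        refine Finset.sum_congr rfl fun m _ => ?_
        rw [mul_neg, Finset.mul_sum, ← Finset.sum_neg_distrib, Finset.mul_sum]
        refine Finset.sum_congr rfl fun k _ => ?_
        rw [flow_pt hg hx ht]
        ring

/-- spatial derivative of the inverse metric -/
lemma spd_ginv (c a b : Fin n) :
    spd c (ginv a b) x t
      = - ∑ m, ∑ k, ginv a m x t * spd c (g m k) x t * ginv k b x t := by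
  have hOp := dom_open hg
  have hdm := mem_dom hg hx ht
  have key : ∀ i j : Fin n,
      ∑ k, (spd c (g i k) x t * ginv k j x t + g i k x t * spd c (ginv k j) x t) = 0 := by
    intro i j
    have h0 : spd c (fun x t => ∑ k, g i k x t * ginv k j x t) x t = 0 := by
      rw [spd_congr (v := fun _ _ => if i = j then (1:ℝ) else 0) hg.1 hx
        (fun y hy => (ptfacts hg hy (hIco hg hx ht)).2.2.1 i j) c]
      exact spd_constFn _ c x t
    rw [spd_sum c (fun k _ => ((smg hg i k).mul (smginv hg k j)).diff_x hOp hdm)] at h0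
    rw [← h0]
    refine Finset.sum_congr rfl fun k _ => ?_
    rw [spd_mul c ((smg hg i k).diff_x hOp hdm) ((smginv hg k j).diff_x hOp hdm)]
  have solve : ∀ k j : Fin n,
      ∑ k', g k k' x t * spd c (ginv k' j) x t
        = - ∑ k', spd c (g k k') x t * ginv k' j x t := by
    intro k j
    have := key k j
    rw [Finset.sum_add_distrib] at this
    linarith
  calc spd c (ginv a b) x t
      = ∑ k, (if a = k then (1:ℝ) else 0) * spd c (ginv k b) x t := by simp
    _ = ∑ k, (∑ m, ginv a m x t * g m k x t) * spd c (ginv k b) x t := by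
        refine Finset.sum_congr rfl fun k _ => ?_
        rw [delta_left hg hx ht]
    _ = ∑ k, ∑ m, ginv a m x t * g m k x t * spd c (ginv k b) x t := by
        refine Finset.sum_congr rfl fun k _ => ?_
        rw [Finset.sum_mul]
    _ = ∑ m, ∑ k, ginv a m x t * g m k x t * spd c (ginv k b) x t := by
        exact Finset.sum_comm
    _ = ∑ m, ginv a m x t * ∑ k, g m k x t * spd c (ginv k b) x t := by
        refine Finset.sum_congr rfl fun m _ => ?_
        rw [Finset.mul_sum]
        refine Finset.sum_congr rfl fun k _ => ?_
        ring
    _ = ∑ m, ginv a m x t * (- ∑ k, spd c (g m k) x t * ginv k b x t) := by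
        refine Finset.sum_congr rfl fun m _ => ?_
        rw [solve]
    _ = - ∑ m, ∑ k, ginv a m x t * spd c (g m k) x t * ginv k b x t := by
        rw [← Finset.sum_neg_distrib]
        refine Finset.sum_congr rfl fun m _ => ?_
        rw [mul_neg, neg_inj, Finset.mul_sum]
        refine Finset.sum_congr rfl fun k _ => ?_
        ring

end PT
end CCP
end


noncomputable section
open Filter CC CCP

namespace CCP

variable {n : ℕ} {Ωs : Set (Fin n → ℝ)} {T : ℝ} {g ginv : Met n}
  {x : Fin n → ℝ} {t : ℝ}

lemma half_two_sum (D : Fin n → Fin n → ℝ) (Sv : ℝ) :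
    (1/2) * ((2 * ∑ a, ∑ c, D a c) * Sv) = ∑ a, ∑ c, D a c * Sv := by
  calc (1/2) * ((2 * ∑ a, ∑ c, D a c) * Sv) = (∑ a, ∑ c, D a c) * Sv := by ring
    _ = ∑ a, (∑ c, D a c) * Sv := Finset.sum_mul _ _ _
    _ = ∑ a, ∑ c, D a c * Sv := Finset.sum_congr rfl fun a _ => Finset.sum_mul _ _ _

section PT
variable (hg : RicciFlow Ωs T g ginv) (hx : x ∈ Ωs) (ht : t ∈ Set.Ioo (0:ℝ) T)
include hg hx ht

/-- `∂_a g^{lm} = -Γ^l_{ap} g^{pm} - Γ^m_{ap} g^{pl}` -/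
lemma spd_ginv_Gamma (a l m : Fin n) :
    spd a (ginv l m) x t
      = - ∑ p, (Gamma g ginv l a p x t * ginv p m x t
               + Gamma g ginv m a p x t * ginv p l x t) := by
  rw [spd_ginv hg hx ht, neg_inj]
  symm
  have hA : ∑ p, Gamma g ginv l a p x t * ginv p m x t
      = ∑ q, ∑ p, (1/2) * (ginv l q x t *
          (spd a (g p q) x t + spd p (g a q) x t - spd q (g a p) x t)) * ginv p m x t := by
    rw [Finset.sum_comm]
    refine Finset.sum_congr rfl fun p _ => ?_
    simp only [Gamma]
    rw [Finset.mul_sum, Finset.sum_mul]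
  have hB : ∑ p, Gamma g ginv m a p x t * ginv p l x t
      = ∑ q, ∑ p, (1/2) * (ginv m p x t *
          (spd a (g q p) x t + spd q (g a p) x t - spd p (g a q) x t)) * ginv q l x t := by
    refine Finset.sum_congr rfl fun q _ => ?_
    simp only [Gamma]
    rw [Finset.mul_sum, Finset.sum_mul]
  rw [Finset.sum_add_distrib, hA, hB, ← Finset.sum_add_distrib]
  refine Finset.sum_congr rfl fun q _ => ?_
  rw [← Finset.sum_add_distrib]
  refine Finset.sum_congr rfl fun p _ => ?_
  rw [Dg_sym hg hx ht a p q, ginvsym_pt hg hx ht m p, ginvsym_pt hg hx ht q l]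
  ring


/-- `∇_a R^l_j = g^{lm} ∇_a R_{jm}` -/
lemma cd11_raise (a l j : Fin n) :
    cd11 g ginv a (RicUp g ginv) l j x t
      = ∑ m, ginv l m x t * cd2 g ginv a (Ric g ginv) j m x t := by
  have hOp := dom_open hg
  have hdm := mem_dom hg hx ht
  have h1 : spd a (RicUp g ginv l j) x t
      = ∑ m, spd a (ginv l m) x t * Ric g ginv j m x t
      + ∑ m, ginv l m x t * spd a (Ric g ginv j m) x t := by
    have h0 : spd a (RicUp g ginv l j) x t
        = ∑ m, spd a (fun x t => ginv l m x t * Ric g ginv j m x t) x t :=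
      spd_sum a (fun m _ => ((smginv hg l m).mul (smRic hg j m)).diff_x hOp hdm)
    rw [h0, ← Finset.sum_add_distrib]
    refine Finset.sum_congr rfl fun m _ => ?_
    exact spd_mul a ((smginv hg l m).diff_x hOp hdm) ((smRic hg j m).diff_x hOp hdm)
  have hS : ∑ m, spd a (ginv l m) x t * Ric g ginv j m x t
      = - (∑ p, Gamma g ginv l a p x t * RicUp g ginv p j x t)
        - ∑ m, ginv l m x t * (∑ p, Gamma g ginv p a m x t * Ric g ginv j p x t) := by
    calc ∑ m, spd a (ginv l m) x t * Ric g ginv j m x t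
        = ∑ m, (- ∑ p, (Gamma g ginv l a p x t * ginv p m x t
            + Gamma g ginv m a p x t * ginv p l x t)) * Ric g ginv j m x t := by
          refine Finset.sum_congr rfl fun m _ => ?_
          rw [spd_ginv_Gamma hg hx ht]
      _ = - ∑ m, ∑ p, (Gamma g ginv l a p x t * ginv p m x t * Ric g ginv j m x t
            + Gamma g ginv m a p x t * ginv p l x t * Ric g ginv j m x t) := by
          rw [← Finset.sum_neg_distrib]
          refine Finset.sum_congr rfl fun m _ => ?_
          rw [neg_mul, Finset.sum_mul, neg_inj]
          exact Finset.sum_congr rfl fun p _ => by ring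
      _ = - (∑ m, ∑ p, Gamma g ginv l a p x t * ginv p m x t * Ric g ginv j m x t)
          - ∑ m, ∑ p, Gamma g ginv m a p x t * ginv p l x t * Ric g ginv j m x t := by
          rw [show (∑ m, ∑ p, (Gamma g ginv l a p x t * ginv p m x t * Ric g ginv j m x t
            + Gamma g ginv m a p x t * ginv p l x t * Ric g ginv j m x t))
            = (∑ m, ∑ p, Gamma g ginv l a p x t * ginv p m x t * Ric g ginv j m x t)
            + ∑ m, ∑ p, Gamma g ginv m a p x t * ginv p l x t * Ric g ginv j m x t from by
              rw [← Finset.sum_add_distrib]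
              exact Finset.sum_congr rfl fun m _ => Finset.sum_add_distrib]
          ring
      _ = - (∑ p, Gamma g ginv l a p x t * RicUp g ginv p j x t)
          - ∑ m, ginv l m x t * (∑ p, Gamma g ginv p a m x t * Ric g ginv j p x t) := by
          congr 1
          · rw [neg_inj, Finset.sum_comm]
            refine Finset.sum_congr rfl fun p _ => ?_
            rw [show RicUp g ginv p j x t = ∑ m, ginv p m x t * Ric g ginv j m x t from rfl,
              Finset.mul_sum]
            exact Finset.sum_congr rfl fun m _ => by ring
          · rw [Finset.sum_comm]
            refine Finset.sum_congr rfl fun m _ => ?_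
            rw [Finset.mul_sum]
            refine Finset.sum_congr rfl fun p _ => ?_
            rw [ginvsym_pt hg hx ht m l]
            ring
  have hT : ∑ p, Gamma g ginv p a j x t * RicUp g ginv l p x t
      = ∑ m, ginv l m x t * ∑ p, Gamma g ginv p a j x t * Ric g ginv p m x t := by
    calc ∑ p, Gamma g ginv p a j x t * RicUp g ginv l p x t
        = ∑ p, ∑ m, Gamma g ginv p a j x t * (ginv l m x t * Ric g ginv p m x t) := by
          refine Finset.sum_congr rfl fun p _ => ?_
          rw [show RicUp g ginv l p x t = ∑ m, ginv l m x t * Ric g ginv p m x t from rfl,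
            Finset.mul_sum]
      _ = ∑ m, ∑ p, Gamma g ginv p a j x t * (ginv l m x t * Ric g ginv p m x t) := by
          exact Finset.sum_comm
      _ = ∑ m, ginv l m x t * ∑ p, Gamma g ginv p a j x t * Ric g ginv p m x t := by
          refine Finset.sum_congr rfl fun m _ => ?_
          rw [Finset.mul_sum]
          exact Finset.sum_congr rfl fun p _ => by ring
  have hR : ∑ m, ginv l m x t * cd2 g ginv a (Ric g ginv) j m x t
      = ∑ m, ginv l m x t * spd a (Ric g ginv j m) x t
      - ∑ m, ginv l m x t * ∑ p, Gamma g ginv p a j x t * Ric g ginv p m x t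
      - ∑ m, ginv l m x t * (∑ p, Gamma g ginv p a m x t * Ric g ginv j p x t) := by
    rw [← Finset.sum_sub_distrib, ← Finset.sum_sub_distrib]
    refine Finset.sum_congr rfl fun m _ => ?_
    simp only [cd2]
    ring
  simp only [cd11]
  rw [h1, hS, hT, hR]
  ring

/-- `∂_t Γ^l_{jk} = -g^{lm}(∇_j R_{km} + ∇_k R_{jm} - ∇_m R_{jk})` -/
lemma tpd_Gamma (l j k : Fin n) :
    tpd (Gamma g ginv l j k) x t
      = - ∑ m, ginv l m x t * (cd2 g ginv j (Ric g ginv) k m x t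
          + cd2 g ginv k (Ric g ginv) j m x t - cd2 g ginv m (Ric g ginv) j k x t) := by
  have hOp := dom_open hg
  have hdm := mem_dom hg hx ht
  have dgx : ∀ a b c : Fin n, DifferentiableAt ℝ (fun s => spd a (g b c) x s) t :=
    fun a b c => ((smg hg b c).spd hOp a).diff_t hOp hdm
  have h5 : ∀ a b c : Fin n,
      tpd (spd a (g b c)) x t = -2 * spd a (Ric g ginv b c) x t := by
    intro a b c
    rw [tpd_spd_comm (smg hg b c) hOp hdm a,
      spd_congr (v := fun x t => -2 * Ric g ginv b c x t) hg.1 hx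
        (fun y hy => (ptfacts hg hy (hIco hg hx ht)).2.2.2 b c) a,
      spd_const_mul]
  have hred : tpd (Gamma g ginv l j k) x t
      = (1/2) * ∑ m, (tpd (ginv l m) x t *
          (spd j (g k m) x t + spd k (g j m) x t - spd m (g j k) x t)
        + ginv l m x t * (-2 * spd j (Ric g ginv k m) x t
            + -2 * spd k (Ric g ginv j m) x t - -2 * spd m (Ric g ginv j k) x t)) := by
    have h0 : tpd (Gamma g ginv l j k) x t
        = (1/2) * tpd (fun x t => ∑ m, ginv l m x t *
            (spd j (g k m) x t + spd k (g j m) x t - spd m (g j k) x t)) x t :=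
      tpd_const_mul _ _ x t
    rw [h0, tpd_sum (fun m _ => ((smginv hg l m).mul
        ((((smg hg k m).spd hOp j).add ((smg hg j m).spd hOp k)).sub
          ((smg hg j k).spd hOp m))).diff_t hOp hdm)]
    congr 1
    refine Finset.sum_congr rfl fun m _ => ?_
    rw [tpd_mul ((smginv hg l m).diff_t hOp hdm)
        (((dgx j k m).add (dgx k j m)).sub (dgx m j k)),
      tpd_sub ((dgx j k m).add (dgx k j m)) (dgx m j k),
      tpd_add (dgx j k m) (dgx k j m), h5, h5, h5]
  have hGam2 : ∀ c : Fin n, ∑ m, ginv c m x t *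
      (spd j (g k m) x t + spd k (g j m) x t - spd m (g j k) x t)
      = 2 * Gamma g ginv c j k x t := by
    intro c
    rw [show Gamma g ginv c j k x t = (1/2) * ∑ m, ginv c m x t *
      (spd j (g k m) x t + spd k (g j m) x t - spd m (g j k) x t) from rfl]
    ring
  have hK : (1/2) * ∑ m, tpd (ginv l m) x t *
      (spd j (g k m) x t + spd k (g j m) x t - spd m (g j k) x t)
      = 2 * ∑ m, ginv l m x t * ∑ p, Gamma g ginv p j k x t * Ric g ginv p m x t := by
    calc (1/2) * ∑ m, tpd (ginv l m) x t *
        (spd j (g k m) x t + spd k (g j m) x t - spd m (g j k) x t)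
        = ∑ m, (1/2) * (tpd (ginv l m) x t *
            (spd j (g k m) x t + spd k (g j m) x t - spd m (g j k) x t)) := Finset.mul_sum _ _ _
      _ = ∑ m, ∑ a, ∑ c, (ginv l a x t * Ric g ginv a c x t * ginv c m x t) *
            (spd j (g k m) x t + spd k (g j m) x t - spd m (g j k) x t) := by
          refine Finset.sum_congr rfl fun m _ => ?_
          rw [tpd_ginv hg hx ht]
          exact half_two_sum _ _
      _ = ∑ a, ∑ c, ∑ m, (ginv l a x t * Ric g ginv a c x t * ginv c m x t) *
            (spd j (g k m) x t + spd k (g j m) x t - spd m (g j k) x t) := by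
          rw [Finset.sum_comm]
          exact Finset.sum_congr rfl fun a _ => Finset.sum_comm
      _ = ∑ a, ∑ c, (ginv l a x t * Ric g ginv a c x t) * (2 * Gamma g ginv c j k x t) := by
          refine Finset.sum_congr rfl fun a _ => Finset.sum_congr rfl fun c _ => ?_
          rw [← hGam2 c, Finset.mul_sum]
          exact Finset.sum_congr rfl fun m _ => by ring
      _ = 2 * ∑ m, ginv l m x t * ∑ p, Gamma g ginv p j k x t * Ric g ginv p m x t := by
          rw [Finset.mul_sum]
          refine Finset.sum_congr rfl fun m _ => ?_
          rw [Finset.mul_sum, Finset.mul_sum]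
          refine Finset.sum_congr rfl fun p _ => ?_
          rw [Ric_sym hg hx ht m p]
          ring
  rw [hred, Finset.sum_add_distrib, mul_add, hK, Finset.mul_sum, Finset.mul_sum,
    ← Finset.sum_neg_distrib, ← Finset.sum_add_distrib]
  refine Finset.sum_congr rfl fun m _ => ?_
  simp only [cd2]
  have e1 : ∑ p, Gamma g ginv p k j x t * Ric g ginv p m x t
      = ∑ p, Gamma g ginv p j k x t * Ric g ginv p m x t :=
    Finset.sum_congr rfl fun p _ => by rw [Gamma_sym hg hx ht p k j]
  have e2 : ∑ p, Gamma g ginv p m j x t * Ric g ginv p k x t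
      = ∑ p, Gamma g ginv p j m x t * Ric g ginv k p x t :=
    Finset.sum_congr rfl fun p _ => by
      rw [Gamma_sym hg hx ht p m j, Ric_sym hg hx ht p k]
  have e3 : ∑ p, Gamma g ginv p m k x t * Ric g ginv j p x t
      = ∑ p, Gamma g ginv p k m x t * Ric g ginv j p x t :=
    Finset.sum_congr rfl fun p _ => by rw [Gamma_sym hg hx ht p m k]
  rw [e1, e2, e3]
  ring

end PT
end CCP
end


noncomputable section
open Filter CC CCP

namespace CCP

variable {n : ℕ} {Ωs : Set (Fin n → ℝ)} {T : ℝ} {g ginv : Met n}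
  {x : Fin n → ℝ} {t : ℝ} {ε δ : ℝ}

lemma spd_add_tconst (u : Fld n) (φ : ℝ → ℝ) (i : Fin n) (x : Fin n → ℝ) (t : ℝ) :
    spd i (fun x t => u x t + φ t) x t = spd i u x t := by
  simp only [spd]
  rw [fderiv_add_const]

/-- spatial Christoffel symbols of `g̃` agree with those of `g` -/
lemma GammaE_sss (g ginv : Met n) (ε δ : ℝ) (l i j : Fin n) :
    GammaE g ginv ε δ l.succ i.succ j.succ = Gamma g ginv l i j := by
  funext x t
  simp only [GammaE, Gamma, Fin.sum_univ_succ, gEinv_succ_zero, gEinv_succ_succ,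
    gE_succ_succ, gE_succ_zero, spdT_succ, spd_zeroFn]
  simp

lemma GammaE_s0s (g ginv : Met n) (ε δ : ℝ) (l j : Fin n) :
    GammaE g ginv ε δ l.succ 0 j.succ
      = fun x t => (1/2) * ∑ m, ginv l m x t * tpd (g j m) x t := by
  funext x t
  simp only [GammaE, Fin.sum_univ_succ, gEinv_succ_zero, gEinv_succ_succ,
    gE_succ_succ, gE_succ_zero, gE_zero_succ, spdT_succ, spdT_zero, spd_zeroFn]
  simp

lemma GammaE_ss0 (g ginv : Met n) (ε δ : ℝ) (l j : Fin n) :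
    GammaE g ginv ε δ l.succ j.succ 0
      = fun x t => (1/2) * ∑ m, ginv l m x t * tpd (g j m) x t := by
  funext x t
  simp only [GammaE, Fin.sum_univ_succ, gEinv_succ_zero, gEinv_succ_succ,
    gE_succ_succ, gE_succ_zero, gE_zero_succ, spdT_succ, spdT_zero, spd_zeroFn]
  simp

lemma GammaE_s00 (g ginv : Met n) (ε δ : ℝ) (l : Fin n) :
    GammaE g ginv ε δ l.succ 0 0
      = fun x t => -((1/2) * gradScal g ginv l x t) := by
  funext x t
  simp only [GammaE, gradScal, Fin.sum_univ_succ, gEinv_succ_zero, gEinv_succ_succ,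
    gE_zero_succ, gE_zero_zero, spdT_succ, spdT_zero, tpd_zeroFn, spd_add_tconst]
  rw [zero_mul, zero_add, Finset.mul_sum, Finset.mul_sum, ← Finset.sum_neg_distrib]
  exact Finset.sum_congr rfl fun m _ => by ring

section PT
variable (hg : RicciFlow Ωs T g ginv) (hx : x ∈ Ωs) (ht : t ∈ Set.Ioo (0:ℝ) T)
  (hδ : 0 < δ)
include hg hx ht

lemma GammaE_s0s_val (l j : Fin n) :
    GammaE g ginv ε δ l.succ 0 j.succ x t = - RicUp g ginv l j x t := by
  rw [GammaE_s0s]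
  simp only []
  rw [show RicUp g ginv l j x t = ∑ m, ginv l m x t * Ric g ginv j m x t from rfl,
    Finset.mul_sum, ← Finset.sum_neg_distrib]
  refine Finset.sum_congr rfl fun m _ => ?_
  rw [flow_pt hg hx ht]
  ring

lemma GammaE_ss0_val (l j : Fin n) :
    GammaE g ginv ε δ l.succ j.succ 0 x t = - RicUp g ginv l j x t := by
  rw [GammaE_ss0]
  simp only []
  rw [show RicUp g ginv l j x t = ∑ m, ginv l m x t * Ric g ginv j m x t from rfl,
    Finset.mul_sum, ← Finset.sum_neg_distrib]
  refine Finset.sum_congr rfl fun m _ => ?_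
  rw [flow_pt hg hx ht]
  ring

lemma GammaE_0ss_val (j k : Fin n) :
    GammaE g ginv ε δ 0 j.succ k.succ x t
      = Ric g ginv j k x t / (Scal g ginv x t + ε / (2 * (t + δ))) := by
  simp only [GammaE, Fin.sum_univ_succ, gEinv_zero_zero, gEinv_zero_succ,
    gE_succ_zero, gE_zero_succ, gE_succ_succ, spdT_succ, spdT_zero, spd_zeroFn]
  simp only [zero_mul, mul_zero, add_zero, zero_add, Finset.sum_const_zero]
  rw [flow_pt hg hx ht, div_eq_mul_inv]
  ring

lemma GammaE_00s_val (j : Fin n) :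
    GammaE g ginv ε δ 0 0 j.succ x t
      = (1/2) * (spd j (Scal g ginv) x t / (Scal g ginv x t + ε / (2 * (t + δ)))) := by
  simp only [GammaE, Fin.sum_univ_succ, gEinv_zero_zero, gEinv_zero_succ,
    gE_succ_zero, gE_zero_succ, gE_zero_zero, spdT_succ, spdT_zero, tpd_zeroFn,
    spd_add_tconst]
  simp only [zero_mul, mul_zero, add_zero, zero_add, Finset.sum_const_zero]
  rw [div_eq_mul_inv]
  ring

lemma GammaE_0s0_val (j : Fin n) :
    GammaE g ginv ε δ 0 j.succ 0 x t
      = (1/2) * (spd j (Scal g ginv) x t / (Scal g ginv x t + ε / (2 * (t + δ)))) := by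
  simp only [GammaE, Fin.sum_univ_succ, gEinv_zero_zero, gEinv_zero_succ,
    gE_succ_zero, gE_zero_succ, gE_zero_zero, spdT_succ, spdT_zero, tpd_zeroFn,
    spd_add_tconst]
  simp only [zero_mul, mul_zero, add_zero, zero_add, Finset.sum_const_zero]
  rw [div_eq_mul_inv]
  ring

include hδ in
lemma tpd_gE00 :
    tpd (fun x t => Scal g ginv x t + ε / (2 * (t + δ))) x t
      = tpd (Scal g ginv) x t - ε / (2 * (t + δ)^2) := by
  have hne : 2 * (t + δ) ≠ 0 := ne_of_gt (by nlinarith [ht.1])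
  have h1 : HasDerivAt (fun s : ℝ => ε / (2 * (s + δ))) (-(ε / (2 * (t + δ)^2))) t := by
    have h : HasDerivAt (fun s : ℝ => 2 * (s + δ)) 2 t := by
      simpa using ((hasDerivAt_id t).add_const δ).const_mul 2
    have h2 := (hasDerivAt_const t ε).div h hne
    have h4 : (t + δ) ≠ 0 := ne_of_gt (by nlinarith [ht.1])
    have he : (0 * (2 * (t + δ)) - ε * 2) / (2 * (t + δ)) ^ 2
        = -(ε / (2 * (t + δ)^2)) := by
      field_simp
      ring
    rwa [he] at h2
  rw [tpd_add ((smScal hg).diff_t (dom_open hg) (mem_dom hg hx ht)) h1.differentiableAt]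
  have h3 : tpd (fun _ s => ε / (2 * (s + δ))) x t = -(ε / (2 * (t + δ)^2)) := h1.deriv
  rw [h3]
  ring

include hδ in
lemma GammaE_000_val :
    GammaE g ginv ε δ 0 0 0 x t
      = (1/2) * ((tpd (Scal g ginv) x t - ε / (2 * (t + δ)^2))
          / (Scal g ginv x t + ε / (2 * (t + δ)))) := by
  simp only [GammaE, Fin.sum_univ_succ, gEinv_zero_zero, gEinv_zero_succ,
    gE_zero_zero, spdT_zero]
  simp only [zero_mul, mul_zero, add_zero, zero_add, Finset.sum_const_zero]
  rw [tpd_gE00 hg hx ht hδ, div_eq_mul_inv]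
  ring

end PT
end CCP
end


noncomputable section
open Filter CC CCP

namespace CCP

variable {n : ℕ} {Ωs : Set (Fin n → ℝ)} {T : ℝ} {g ginv : Met n}
  {x : Fin n → ℝ} {t : ℝ} {ε δ : ℝ}

section PT
variable (hg : RicciFlow Ωs T g ginv) (hx : x ∈ Ωs) (ht : t ∈ Set.Ioo (0:ℝ) T)
  (hδ : 0 < δ)
include hg hx ht

lemma part1 (i j k l : Fin n) :
    RiemT (GammaE g ginv ε δ) l.succ i.succ j.succ k.succ x t
      = Riem g ginv l i j k x t
        - (RicUp g ginv l i x t * Ric g ginv j k x t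
           - RicUp g ginv l j x t * Ric g ginv i k x t)
          / (Scal g ginv x t + ε / (2 * (t + δ))) := by
  simp only [RiemT, spdT_succ, Fin.sum_univ_succ]
  simp only [GammaE_sss, GammaE_0ss_val hg hx ht, GammaE_ss0_val hg hx ht]
  simp only [Riem]
  ring

lemma part2 (j k l : Fin n) :
    RiemT (GammaE g ginv ε δ) l.succ 0 j.succ k.succ x t
      = - cd11 g ginv k (RicUp g ginv) l j x t
      + (∑ m, ginv l m x t * cd2 g ginv m (Ric g ginv) j k x t)
      - (1/2) * (Ric g ginv j k x t * gradScal g ginv l x t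
          - RicUp g ginv l j x t * spd k (Scal g ginv) x t)
        / (Scal g ginv x t + ε / (2 * (t + δ))) := by
  have hsp : spd j (GammaE g ginv ε δ l.succ 0 k.succ) x t
      = -(spd j (RicUp g ginv l k) x t) := by
    rw [spd_congr (v := fun x t => -(RicUp g ginv l k x t)) hg.1 hx
      (fun y hy => GammaE_s0s_val hg hy ht l k) j, spd_neg]
  simp only [RiemT, spdT_succ, spdT_zero, Fin.sum_univ_succ]
  rw [hsp, GammaE_sss, tpd_Gamma hg hx ht]
  simp only [GammaE_sss, GammaE_s0s_val hg hx ht, GammaE_ss0_val hg hx ht,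
    GammaE_0ss_val hg hx ht, GammaE_00s_val hg hx ht, GammaE_s00]
  have hsplit : ∑ m, ginv l m x t * (cd2 g ginv j (Ric g ginv) k m x t
      + cd2 g ginv k (Ric g ginv) j m x t - cd2 g ginv m (Ric g ginv) j k x t)
      = ∑ m, ginv l m x t * cd2 g ginv j (Ric g ginv) k m x t
      + ∑ m, ginv l m x t * cd2 g ginv k (Ric g ginv) j m x t
      - ∑ m, ginv l m x t * cd2 g ginv m (Ric g ginv) j k x t := by
    rw [← Finset.sum_add_distrib, ← Finset.sum_sub_distrib]
    exact Finset.sum_congr rfl fun m _ => by ring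
  rw [hsplit, ← cd11_raise hg hx ht j l k, ← cd11_raise hg hx ht k l j]
  have hquad : (∑ m, (Gamma g ginv m j k x t * -RicUp g ginv l m x t
      - -RicUp g ginv m k x t * Gamma g ginv l j m x t))
      = ∑ p, Gamma g ginv l j p x t * RicUp g ginv p k x t
      - ∑ p, Gamma g ginv p j k x t * RicUp g ginv l p x t := by
    rw [← Finset.sum_sub_distrib]
    exact Finset.sum_congr rfl fun m _ => by ring
  rw [hquad]
  simp only [cd11]
  ring

include hδ in
lemma part3 (i l : Fin n) :
    RiemT (GammaE g ginv ε δ) l.succ i.succ 0 0 x t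
      = tpd (RicUp g ginv l i) x t
      - (1/2) * cdVec g ginv i (gradScal g ginv) l x t
      - (∑ m, RicUp g ginv m i x t * RicUp g ginv l m x t)
      - (((1/2) * tpd (Scal g ginv) x t - ε / (4 * (t + δ)^2)) *
            RicUp g ginv l i x t
         - (1/4) * spd i (Scal g ginv) x t * gradScal g ginv l x t)
        / (Scal g ginv x t + ε / (2 * (t + δ))) := by
  have htp : tpd (GammaE g ginv ε δ l.succ i.succ 0) x t
      = -(tpd (RicUp g ginv l i) x t) := by
    rw [tpd_congr (v := fun x t => -(RicUp g ginv l i x t)) isOpen_Ioo ht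
      (fun s hs => GammaE_ss0_val hg hx hs l i), tpd_neg]
  have hsp0 : spd i (GammaE g ginv ε δ l.succ 0 0) x t
      = -((1/2) * spd i (gradScal g ginv l) x t) := by
    rw [GammaE_s00, spd_neg, spd_const_mul]
  simp only [RiemT, spdT_succ, spdT_zero, Fin.sum_univ_succ]
  rw [hsp0, htp]
  simp only [GammaE_sss, GammaE_ss0_val hg hx ht, GammaE_s0s_val hg hx ht,
    GammaE_000_val hg hx ht hδ, GammaE_0s0_val hg hx ht, GammaE_s00]
  have hquad : ∑ m, (-(1/2 * gradScal g ginv m x t) * Gamma g ginv l i m x t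
      - -RicUp g ginv m i x t * -RicUp g ginv l m x t)
      = -((1/2) * ∑ p, Gamma g ginv l i p x t * gradScal g ginv p x t)
      - ∑ m, RicUp g ginv m i x t * RicUp g ginv l m x t := by
    rw [Finset.mul_sum, ← Finset.sum_neg_distrib, ← Finset.sum_sub_distrib]
    exact Finset.sum_congr rfl fun m _ => by ring
  rw [hquad]
  have he : ε / (2 * (t + δ)^2) = 2 * (ε / (4 * (t + δ)^2)) := by
    have h4 : (t + δ) ≠ 0 := ne_of_gt (by nlinarith [ht.1])
    field_simp
    ring
  rw [he]
  simp only [cdVec]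
  ring

end PT
end CCP
end


/-- Lemma 4.4 of Chow–Chu. Components of the curvature of the
space-time metric `g̃_{ε,δ}`, at points where `K = R + ε/(2(t+δ)) > 0`. -/
theorem approx_curvature (n : ℕ) (hn : 2 ≤ n)
    (Ωs : Set (Fin n → ℝ)) (T : ℝ)
    (g ginv : CC.Met n) (hg : CC.RicciFlow Ωs T g ginv)
    (ε δ : ℝ) (hε : 0 < ε) (hδ : 0 < δ) :
    ∀ x ∈ Ωs, ∀ t ∈ Set.Ioo (0:ℝ) T,
      0 < CC.Scal g ginv x t + ε / (2 * (t + δ)) →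
      -- (1)
      (∀ i j k l : Fin n,
        CC.RiemT (CC.GammaE g ginv ε δ) l.succ i.succ j.succ k.succ x t =
          CC.Riem g ginv l i j k x t
          - (CC.RicUp g ginv l i x t * CC.Ric g ginv j k x t
             - CC.RicUp g ginv l j x t * CC.Ric g ginv i k x t)
            / (CC.Scal g ginv x t + ε / (2 * (t + δ)))) ∧
      -- (2)
      (∀ j k l : Fin n,
        CC.RiemT (CC.GammaE g ginv ε δ) l.succ 0 j.succ k.succ x t =
          - CC.cd11 g ginv k (CC.RicUp g ginv) l j x t
          + (∑ m, ginv l m x t * CC.cd2 g ginv m (CC.Ric g ginv) j k x t)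
          - (1/2) * (CC.Ric g ginv j k x t * CC.gradScal g ginv l x t
              - CC.RicUp g ginv l j x t * CC.spd k (CC.Scal g ginv) x t)
            / (CC.Scal g ginv x t + ε / (2 * (t + δ)))) ∧
      -- (3)
      (∀ i l : Fin n,
        CC.RiemT (CC.GammaE g ginv ε δ) l.succ i.succ 0 0 x t =
          CC.tpd (CC.RicUp g ginv l i) x t
          - (1/2) * CC.cdVec g ginv i (CC.gradScal g ginv) l x t
          - (∑ m, CC.RicUp g ginv m i x t * CC.RicUp g ginv l m x t)
          - (((1/2) * CC.tpd (CC.Scal g ginv) x t - ε / (4 * (t + δ)^2)) *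
                CC.RicUp g ginv l i x t
             - (1/4) * CC.spd i (CC.Scal g ginv) x t * CC.gradScal g ginv l x t)
            / (CC.Scal g ginv x t + ε / (2 * (t + δ)))) := by
  intro x hx t ht _hK
  exact ⟨fun i j k l => CCP.part1 hg hx ht i j k l,
    fun j k l => CCP.part2 hg hx ht j k l,
    fun i l => CCP.part3 hg hx ht hδ i l⟩
end
end

section
/- Let g be a solution of the Ricci flow on Ω × [0,T) and fix (x,t) ∈ Ω × (0,T). Then, componentwise at (x,t): for every δ > 0, lim_{ε→∞} Γ̃^k_{ij}(ε,δ) = Γ^k_{ij} for 1 ≤ i,j,k ≤ n; lim_{ε→∞} Γ̃^0_{ij}(ε,δ) = 0 for 1 ≤ i,j ≤ n; lim_{ε→∞} Γ̃^k_{i0}(ε,δ) = −R^k_i for 1 ≤ i,k ≤ n; lim_{ε→∞} Γ̃^k_{00}(ε,δ) = −½ g^{kl}∂_l R for 1 ≤ k ≤ n; lim_{ε→∞} Γ̃^0_{i0}(ε,δ) = 0 for 1 ≤ i ≤ n; and lim_{ε→∞} Γ̃^0_{00}(ε,δ) = −1/(2(t+δ)), which tends to 0 as δ → ∞. Consequently,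 the iterated limit (first ε → ∞, then δ → ∞) of every Christoffel symbol of g̃_{ε,δ} equals the corresponding component of the space-time connection defined by Γ̃^k_{ij} = Γ^k_{ij}, Γ̃^0_{ij} = 0 (0 ≤ i,j ≤ n), Γ̃^k_{i0} = Γ̃^k_{0i} = −R^k_i, Γ̃^k_{00} = −½ g^{kl}∂_l R. -/
/- Common local-coordinate framework for the Chow–Chu space-time
   interpretation of Hamilton's Harnack inequality for the Ricci flow. -/

noncomputable section
open scoped BigOperators
open Filter

/-! ### Auxiliary lemmas for Statement 16 -/

section Aux
open Filter

variable {n : ℕ}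

/-- Smoothness of a time-dependent field on an open set of space-time. -/
def SmOn (s : Set ((Fin n → ℝ) × ℝ)) (u : CC.Fld n) : Prop :=
  ∀ p ∈ s, ContDiffAt ℝ (⊤:ℕ∞) (fun q : (Fin n → ℝ) × ℝ => u q.1 q.2) p

theorem smOn_spd {s : Set ((Fin n → ℝ) × ℝ)} (hs : IsOpen s) {u : CC.Fld n}
    (hu : SmOn s u) (i : Fin n) : SmOn s (CC.spd i u) := by
  intro p hp
  have key : ∀ q ∈ s, CC.spd i u q.1 q.2
      = fderiv ℝ (fun q' : (Fin n → ℝ) × ℝ => u q'.1 q'.2) q (Pi.single i 1, 0) := by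
    intro q hq
    have hd : DifferentiableAt ℝ (fun q' : (Fin n → ℝ) × ℝ => u q'.1 q'.2) q :=
      (hu q hq).differentiableAt (by simp)
    have hι : HasFDerivAt (fun y : Fin n → ℝ => (y, q.2))
        (ContinuousLinearMap.inl ℝ (Fin n → ℝ) ℝ) q.1 := by
      have h := ((ContinuousLinearMap.inl ℝ (Fin n → ℝ) ℝ).hasFDerivAt (x := q.1)).add_const
        ((0 : Fin n → ℝ), q.2)
      simpa using h
    have hcomp := (hd.hasFDerivAt.comp q.1 hι)
    have := hcomp.fderiv
    show fderiv ℝ (fun y => u y q.2) q.1 (Pi.single i 1) = _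
    rw [show (fun y : Fin n → ℝ => u y q.2)
        = (fun q' : (Fin n → ℝ) × ℝ => u q'.1 q'.2) ∘ (fun y => (y, q.2)) from rfl, this]
    simp
  have hF : ContDiffAt ℝ (⊤:ℕ∞)
      (fun q => fderiv ℝ (fun q' : (Fin n → ℝ) × ℝ => u q'.1 q'.2) q (Pi.single i 1, 0)) p := by
    have h1 : ContDiffAt ℝ (⊤:ℕ∞) (fderiv ℝ (fun q' : (Fin n → ℝ) × ℝ => u q'.1 q'.2)) p :=
      (hu p hp).fderiv_right (by exact_mod_cast le_top)
    exact (ContinuousLinearMap.apply ℝ ℝ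
      ((Pi.single i 1, 0) : (Fin n → ℝ) × ℝ)).contDiff.contDiffAt.comp p h1
  exact hF.congr_of_eventuallyEq
    (Filter.eventuallyEq_of_mem (hs.mem_nhds hp) (fun q hq => key q hq))

theorem contDiffAt_det' {E : Type*} [NormedAddCommGroup E] [NormedSpace ℝ E]
    {m : ℕ} {M : E → Matrix (Fin m) (Fin m) ℝ} {p : E}
    (h : ∀ a b, ContDiffAt ℝ (⊤:ℕ∞) (fun q => M q a b) p) :
    ContDiffAt ℝ (⊤:ℕ∞) (fun q => (M q).det) p := by
  simp only [Matrix.det_apply]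
  refine ContDiffAt.sum fun σ _ => ?_
  simp only [Units.smul_def, zsmul_eq_mul]
  exact contDiffAt_const.mul (contDiffAt_prod fun i _ => h (σ i) i)

theorem contDiffAt_inv_entry {E : Type*} [NormedAddCommGroup E] [NormedSpace ℝ E]
    {m : ℕ} {M : E → Matrix (Fin m) (Fin m) ℝ} {p : E}
    (h : ∀ a b, ContDiffAt ℝ (⊤:ℕ∞) (fun q => M q a b) p)
    (hd : (M p).det ≠ 0) (i j : Fin m) :
    ContDiffAt ℝ (⊤:ℕ∞) (fun q => ((M q).det)⁻¹ * (M q).adjugate i j) p := by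
  have h1 : ContDiffAt ℝ (⊤:ℕ∞) (fun q => (M q).det) p := contDiffAt_det' h
  have h2 : ContDiffAt ℝ (⊤:ℕ∞) (fun q => ((M q).det)⁻¹) p := h1.inv hd
  have h3 : ContDiffAt ℝ (⊤:ℕ∞) (fun q => (M q).adjugate i j) p := by
    simp only [Matrix.adjugate_apply]
    apply contDiffAt_det' (M := fun q => (M q).updateRow j (Pi.single i 1))
    intro a b
    by_cases hab : a = j
    · simp only [Matrix.updateRow_apply, hab, if_pos rfl]; exact contDiffAt_const
    · simpa [Matrix.updateRow_apply, hab] using h a b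
  exact h2.mul h3

theorem smOn_ginv {g ginv : CC.Met n} {s : Set ((Fin n → ℝ) × ℝ)} (hs : IsOpen s)
    (hgc : ∀ i j, SmOn s (g i j))
    (hid : ∀ q : (Fin n → ℝ) × ℝ, q ∈ s → ∀ i j,
      ∑ k, g i k q.1 q.2 * ginv k j q.1 q.2 = (if i = j then (1:ℝ) else 0))
    (i j : Fin n) : SmOn s (ginv i j) := by
  intro p hp
  set A : ((Fin n → ℝ) × ℝ) → Matrix (Fin n) (Fin n) ℝ :=
    fun q => Matrix.of fun a b => g a b q.1 q.2 with hA
  have hmul : ∀ q ∈ s, A q * (Matrix.of fun a b => ginv a b q.1 q.2) = 1 := by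
    intro q hq
    ext a b
    simpa [Matrix.mul_apply, Matrix.one_apply, hA] using hid q hq a b
  have hdet : (A p).det ≠ 0 :=
    (Matrix.isUnit_det_of_right_inverse (hmul p hp)).ne_zero
  have hsm := contDiffAt_inv_entry (fun a b => hgc a b p hp) hdet i j
  apply hsm.congr_of_eventuallyEq
  apply Filter.eventuallyEq_of_mem (hs.mem_nhds hp)
  intro q hq
  have hinv : (A q)⁻¹ = Matrix.of fun a b => ginv a b q.1 q.2 :=
    Matrix.inv_eq_right_inv (hmul q hq)
  have : ginv i j q.1 q.2 = (A q)⁻¹ i j := by rw [hinv]; rfl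
  show ginv i j q.1 q.2 = _
  rw [this, Matrix.inv_def]
  simp only [Ring.inverse_eq_inv, Matrix.smul_apply, smul_eq_mul]
  rfl

theorem smOn_Scal {g ginv : CC.Met n} {s : Set ((Fin n → ℝ) × ℝ)} (hs : IsOpen s)
    (hgc : ∀ i j, SmOn s (g i j)) (hginv : ∀ i j, SmOn s (ginv i j)) :
    SmOn s (CC.Scal g ginv) := by
  have hG : ∀ k i j, SmOn s (CC.Gamma g ginv k i j) := by
    intro k i j p hp
    simp only [CC.Gamma]
    exact contDiffAt_const.mul (ContDiffAt.sum fun l _ =>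
      (hginv k l p hp).mul ((((smOn_spd hs (hgc j l) i) p hp).add
        ((smOn_spd hs (hgc i l) j) p hp)).sub ((smOn_spd hs (hgc i j) l) p hp)))
  have hR : ∀ l i j k, SmOn s (CC.Riem g ginv l i j k) := by
    intro l i j k p hp
    simp only [CC.Riem]
    exact ((((smOn_spd hs (hG l j k) i) p hp).sub ((smOn_spd hs (hG l i k) j) p hp)).add
      (ContDiffAt.sum fun m _ => ((hG m j k p hp).mul (hG l i m p hp)).sub
        ((hG m i k p hp).mul (hG l j m p hp))))
  intro p hp
  simp only [CC.Scal, CC.Ric]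
  exact ContDiffAt.sum fun j _ => ContDiffAt.sum fun k _ =>
    (hginv j k p hp).mul (ContDiffAt.sum fun q _ => hR q q j k p hp)

theorem tendsto_inv_aux (a b : ℝ) (hb : 0 < b) :
    Tendsto (fun ε : ℝ => (a + ε / (2*b))⁻¹) atTop (nhds 0) := by
  apply Filter.Tendsto.inv_tendsto_atTop
  apply tendsto_atTop_add_const_left
  exact Tendsto.atTop_div_const (by positivity) tendsto_id

theorem tendsto_key000 (a c b : ℝ) (hb : 0 < b) :
    Tendsto (fun ε : ℝ => 1/2 * (a + ε/(2*b))⁻¹ * (c + ε * (-2/(2*b)^2))) atTop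
      (nhds (-1/(2*b))) := by
  have hz : Tendsto (fun ε : ℝ => a / ε) atTop (nhds 0) := by
    simpa [div_eq_mul_inv] using tendsto_inv_atTop_zero.const_mul a
  have hz' : Tendsto (fun ε : ℝ => c / ε) atTop (nhds 0) := by
    simpa [div_eq_mul_inv] using tendsto_inv_atTop_zero.const_mul c
  have h1 : Tendsto (fun ε : ℝ => 1/2 * (a/ε + 1/(2*b))⁻¹ * (c/ε + (-2/(2*b)^2))) atTop
      (nhds (1/2 * ((0:ℝ) + 1/(2*b))⁻¹ * ((0:ℝ) + (-2/(2*b)^2)))) := by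
    exact (tendsto_const_nhds.mul ((hz.add tendsto_const_nhds).inv₀ (by positivity))).mul
      (hz'.add tendsto_const_nhds)
  have hval : 1/2 * ((0:ℝ) + 1/(2*b))⁻¹ * ((0:ℝ) + (-2/(2*b)^2)) = -1/(2*b) := by
    field_simp
    ring
  rw [hval] at h1
  apply h1.congr'
  filter_upwards [eventually_gt_atTop (0:ℝ)] with ε hε
  have hεne : ε ≠ 0 := hε.ne'
  have hbne : b ≠ 0 := hb.ne'
  have h2 : (a + ε/(2*b))/ε = a/ε + 1/(2*b) := by
    rw [add_div, div_right_comm, div_self hεne]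
  have h3 : (c + ε * (-2/(2*b)^2))/ε = c/ε + (-2/(2*b)^2) := by
    rw [add_div, mul_div_cancel_left₀ _ hεne]
  rw [← h2, ← h3, inv_div]
  have : 1/2 * (ε/(a + ε/(2*b))) * ((c + ε * (-2/(2*b)^2))/ε)
      = (ε/ε) * (1/2 * (a + ε/(2*b))⁻¹ * (c + ε * (-2/(2*b)^2))) := by
    ring
  rw [this, div_self hε.ne', one_mul]

end Aux

/-- Theorem 4.5(1) of Chow–Chu. As `ε → ∞` (and then
`δ → ∞`), the Christoffel symbols of `g̃_{ε,δ}` converge to the components of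
the degenerate space-time connection `Γ̃` defined by (A1)–(A4). -/
theorem approx_christoffel_limit (n : ℕ) (hn : 2 ≤ n)
    (Ωs : Set (Fin n → ℝ)) (T : ℝ)
    (g ginv : CC.Met n) (hg : CC.RicciFlow Ωs T g ginv)
    (x : Fin n → ℝ) (hx : x ∈ Ωs) (t : ℝ) (ht : t ∈ Set.Ioo (0:ℝ) T) :
    (∀ δ > (0:ℝ),
      (∀ i j k : Fin n,
        Filter.Tendsto (fun ε => CC.GammaE g ginv ε δ k.succ i.succ j.succ x t)
          Filter.atTop (nhds (CC.Gamma g ginv k i j x t))) ∧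
      (∀ i j : Fin n,
        Filter.Tendsto (fun ε => CC.GammaE g ginv ε δ 0 i.succ j.succ x t)
          Filter.atTop (nhds 0)) ∧
      (∀ i k : Fin n,
        Filter.Tendsto (fun ε => CC.GammaE g ginv ε δ k.succ i.succ 0 x t)
          Filter.atTop (nhds (-(CC.RicUp g ginv k i x t)))) ∧
      (∀ k : Fin n,
        Filter.Tendsto (fun ε => CC.GammaE g ginv ε δ k.succ 0 0 x t)
          Filter.atTop (nhds (-(1/2) * CC.gradScal g ginv k x t))) ∧
      (∀ i : Fin n,
        Filter.Tendsto (fun ε => CC.GammaE g ginv ε δ 0 i.succ 0 x t)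
          Filter.atTop (nhds 0)) ∧
      Filter.Tendsto (fun ε => CC.GammaE g ginv ε δ 0 0 0 x t)
        Filter.atTop (nhds (-1 / (2 * (t + δ))))) ∧
    Filter.Tendsto (fun δ : ℝ => -1 / (2 * (t + δ))) Filter.atTop (nhds 0) ∧
    -- consequently, the iterated limit (first `ε → ∞`, then `δ → ∞`) of every
    -- Christoffel symbol of `g̃_{ε,δ}` is the corresponding component of `Γ̃`
    (∀ k i j : Fin (n+1),
      Filter.Tendsto
        (fun δ => limUnder Filter.atTop
          (fun ε => CC.GammaE g ginv ε δ k i j x t))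
        Filter.atTop (nhds (CC.GammaA g ginv 0 k i j x t))) := by
  obtain ⟨hΩ, -, hT, hsmooth, hflow⟩ := hg
  set s : Set ((Fin n → ℝ) × ℝ) := Ωs ×ˢ Set.Ioo 0 T with hs_def
  have hs : IsOpen s := hΩ.prod isOpen_Ioo
  have hmem : ((x, t) : (Fin n → ℝ) × ℝ) ∈ s := ⟨hx, ht⟩
  have hsub : s ⊆ Ωs ×ˢ Set.Ico 0 T := Set.prod_mono_right Set.Ioo_subset_Ico_self
  have hgc : ∀ i j, SmOn s (g i j) := by
    intro i j p hp
    exact (hsmooth i j).contDiffAt (Filter.mem_of_superset (hs.mem_nhds hp) hsub)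
  have hid : ∀ q : (Fin n → ℝ) × ℝ, q ∈ s → ∀ i j,
      ∑ k, g i k q.1 q.2 * ginv k j q.1 q.2 = (if i = j then (1:ℝ) else 0) := by
    intro q hq i j
    exact (hflow q.1 hq.1 q.2 (Set.Ioo_subset_Ico_self hq.2)).2.2.1 i j
  have hginv : ∀ i j, SmOn s (ginv i j) := smOn_ginv hs hgc hid
  have hS : DifferentiableAt ℝ (fun τ => CC.Scal g ginv x τ) t := by
    have h := (smOn_Scal hs hgc hginv (x, t) hmem).differentiableAt (by simp)
    have hemb : DifferentiableAt ℝ (fun τ : ℝ => ((x, τ) : (Fin n → ℝ) × ℝ)) t :=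
      (differentiableAt_const x).prodMk differentiableAt_id
    exact h.comp t hemb
  have htpd : ∀ i j, CC.tpd (g i j) x t = -2 * CC.Ric g ginv i j x t :=
    (hflow x hx t ⟨ht.1.le, ht.2⟩).2.2.2
  -- component formulas
  have c1 : ∀ (δ ε : ℝ) (i j k : Fin n),
      CC.GammaE g ginv ε δ k.succ i.succ j.succ x t = CC.Gamma g ginv k i j x t := by
    intro δ ε i j k
    simp [CC.GammaE, CC.gEinv, CC.gE, CC.spdT, Fin.sum_univ_succ, CC.Gamma]
  have c2 : ∀ (δ ε : ℝ) (i j : Fin n), CC.GammaE g ginv ε δ 0 i.succ j.succ x t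
      = 1/2 * (CC.Scal g ginv x t + ε / (2*(t+δ)))⁻¹ * (-CC.tpd (g i j) x t) := by
    intro δ ε i j
    simp [CC.GammaE, CC.gEinv, CC.gE, CC.spdT, Fin.sum_univ_succ, CC.spd]
    ring
  have c3 : ∀ (δ ε : ℝ) (i k : Fin n), CC.GammaE g ginv ε δ k.succ i.succ 0 x t
      = 1/2 * ∑ l, ginv k l x t * CC.tpd (g i l) x t := by
    intro δ ε i k
    simp [CC.GammaE, CC.gEinv, CC.gE, CC.spdT, Fin.sum_univ_succ, CC.spd]
  have c3' : ∀ (δ ε : ℝ) (j k : Fin n), CC.GammaE g ginv ε δ k.succ 0 j.succ x t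
      = 1/2 * ∑ l, ginv k l x t * CC.tpd (g j l) x t := by
    intro δ ε j k
    simp [CC.GammaE, CC.gEinv, CC.gE, CC.spdT, Fin.sum_univ_succ, CC.spd]
  have c4 : ∀ (δ ε : ℝ) (k : Fin n), CC.GammaE g ginv ε δ k.succ 0 0 x t
      = -(1/2) * ∑ l, ginv k l x t * CC.spd l (CC.Scal g ginv) x t := by
    intro δ ε k
    simp only [CC.GammaE, CC.gEinv, CC.gE, CC.spdT, Fin.sum_univ_succ, Fin.cases_zero,
      Fin.cases_succ, CC.tpd]
    simp [CC.spd, fderiv_add_const, Finset.mul_sum, deriv_const]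
  have c5 : ∀ (δ ε : ℝ) (i : Fin n), CC.GammaE g ginv ε δ 0 i.succ 0 x t
      = 1/2 * (CC.Scal g ginv x t + ε / (2*(t+δ)))⁻¹ * (CC.spd i (CC.Scal g ginv) x t) := by
    intro δ ε i
    simp [CC.GammaE, CC.gEinv, CC.gE, CC.spdT, Fin.sum_univ_succ, CC.spd, CC.tpd,
      fderiv_add_const]
    ring
  have c5' : ∀ (δ ε : ℝ) (j : Fin n), CC.GammaE g ginv ε δ 0 0 j.succ x t
      = 1/2 * (CC.Scal g ginv x t + ε / (2*(t+δ)))⁻¹ * (CC.spd j (CC.Scal g ginv) x t) := by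
    intro δ ε j
    simp [CC.GammaE, CC.gEinv, CC.gE, CC.spdT, Fin.sum_univ_succ, CC.spd, CC.tpd,
      fderiv_add_const]
    ring
  have c6 : ∀ (δ ε : ℝ), CC.GammaE g ginv ε δ 0 0 0 x t
      = 1/2 * (CC.Scal g ginv x t + ε / (2*(t+δ)))⁻¹ *
        (deriv (fun s => CC.Scal g ginv x s + ε / (2*(s+δ))) t) := by
    intro δ ε
    simp [CC.GammaE, CC.gEinv, CC.gE, CC.spdT, Fin.sum_univ_succ, CC.tpd]
    ring
  have hRicUp : ∀ i k : Fin n,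
      (1/2 : ℝ) * ∑ l, ginv k l x t * CC.tpd (g i l) x t = -(CC.RicUp g ginv k i x t) := by
    intro i k
    rw [show CC.RicUp g ginv k i x t = ∑ m, ginv k m x t * CC.Ric g ginv i m x t from rfl,
      ← Finset.sum_neg_distrib, Finset.mul_sum]
    refine Finset.sum_congr rfl fun l _ => ?_
    rw [htpd i l]; ring
  -- the tendsto statements, δ > 0 fixed
  have tA : ∀ δ : ℝ, 0 < δ → ∀ i j k : Fin n,
      Filter.Tendsto (fun ε => CC.GammaE g ginv ε δ k.succ i.succ j.succ x t)
        Filter.atTop (nhds (CC.Gamma g ginv k i j x t)) := by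
    intro δ hδ i j k
    simp only [c1]
    exact tendsto_const_nhds
  have tB : ∀ δ : ℝ, 0 < δ → ∀ i j : Fin n,
      Filter.Tendsto (fun ε => CC.GammaE g ginv ε δ 0 i.succ j.succ x t)
        Filter.atTop (nhds 0) := by
    intro δ hδ i j
    have hb : (0:ℝ) < t + δ := by linarith [ht.1]
    simp only [c2]
    have h := ((tendsto_inv_aux (CC.Scal g ginv x t) (t+δ) hb).const_mul (1/2 : ℝ)).mul_const
      (-CC.tpd (g i j) x t)
    simpa using h
  have tC : ∀ δ : ℝ, 0 < δ → ∀ i k : Fin n,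
      Filter.Tendsto (fun ε => CC.GammaE g ginv ε δ k.succ i.succ 0 x t)
        Filter.atTop (nhds (-(CC.RicUp g ginv k i x t))) := by
    intro δ hδ i k
    simp only [c3, hRicUp]
    exact tendsto_const_nhds
  have tC' : ∀ δ : ℝ, 0 < δ → ∀ j k : Fin n,
      Filter.Tendsto (fun ε => CC.GammaE g ginv ε δ k.succ 0 j.succ x t)
        Filter.atTop (nhds (-(CC.RicUp g ginv k j x t))) := by
    intro δ hδ j k
    simp only [c3', hRicUp]
    exact tendsto_const_nhds
  have tD : ∀ δ : ℝ, 0 < δ → ∀ k : Fin n,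
      Filter.Tendsto (fun ε => CC.GammaE g ginv ε δ k.succ 0 0 x t)
        Filter.atTop (nhds (-(1/2) * CC.gradScal g ginv k x t)) := by
    intro δ hδ k
    simp only [c4]
    have : CC.gradScal g ginv k x t = ∑ l, ginv k l x t * CC.spd l (CC.Scal g ginv) x t := rfl
    rw [this]
    exact tendsto_const_nhds
  have tE : ∀ δ : ℝ, 0 < δ → ∀ i : Fin n,
      Filter.Tendsto (fun ε => CC.GammaE g ginv ε δ 0 i.succ 0 x t)
        Filter.atTop (nhds 0) := by
    intro δ hδ i
    have hb : (0:ℝ) < t + δ := by linarith [ht.1]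
    simp only [c5]
    have h := ((tendsto_inv_aux (CC.Scal g ginv x t) (t+δ) hb).const_mul (1/2 : ℝ)).mul_const
      (CC.spd i (CC.Scal g ginv) x t)
    simpa using h
  have tE' : ∀ δ : ℝ, 0 < δ → ∀ j : Fin n,
      Filter.Tendsto (fun ε => CC.GammaE g ginv ε δ 0 0 j.succ x t)
        Filter.atTop (nhds 0) := by
    intro δ hδ j
    have hb : (0:ℝ) < t + δ := by linarith [ht.1]
    simp only [c5']
    have h := ((tendsto_inv_aux (CC.Scal g ginv x t) (t+δ) hb).const_mul (1/2 : ℝ)).mul_const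
      (CC.spd j (CC.Scal g ginv) x t)
    simpa using h
  have tF : ∀ δ : ℝ, 0 < δ →
      Filter.Tendsto (fun ε => CC.GammaE g ginv ε δ 0 0 0 x t)
        Filter.atTop (nhds (-1 / (2 * (t + δ)))) := by
    intro δ hδ
    have hb : (0:ℝ) < t + δ := by linarith [ht.1]
    have hder : ∀ ε : ℝ, deriv (fun s => CC.Scal g ginv x s + ε / (2*(s+δ))) t
        = deriv (fun s => CC.Scal g ginv x s) t + ε * (-2/(2*(t+δ))^2) := by
      intro ε
      have h2 : HasDerivAt (fun s : ℝ => 2*(s+δ)) 2 t := by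
        simpa using ((hasDerivAt_id t).add_const δ).const_mul 2
      have h3 : HasDerivAt (fun s : ℝ => ε / (2*(s+δ))) (ε * (-2/(2*(t+δ))^2)) t := by
        have h4 := (h2.inv (by positivity)).const_mul ε
        simpa [div_eq_mul_inv] using h4
      rw [deriv_fun_add hS h3.differentiableAt, h3.deriv]
    simp only [c6, hder]
    exact tendsto_key000 (CC.Scal g ginv x t) (deriv (fun s => CC.Scal g ginv x s) t) (t+δ) hb
  have part2 : Filter.Tendsto (fun δ : ℝ => -1 / (2 * (t + δ))) Filter.atTop (nhds 0) := by
    have h1 : Filter.Tendsto (fun δ : ℝ => 2 * (t + δ)) Filter.atTop Filter.atTop := by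
      apply Filter.Tendsto.const_mul_atTop (by norm_num)
      exact tendsto_atTop_add_const_left _ _ tendsto_id
    have h2 := h1.inv_tendsto_atTop.const_mul (-1 : ℝ)
    simpa [div_eq_mul_inv] using h2
  refine ⟨fun δ hδ => ⟨tA δ hδ, tB δ hδ, tC δ hδ, tD δ hδ, tE δ hδ, tF δ hδ⟩, part2, ?_⟩
  intro k i j
  induction k using Fin.cases with
  | zero =>
    have hGA : CC.GammaA g ginv 0 0 i j x t = 0 := by simp [CC.GammaA]
    rw [hGA]
    induction i using Fin.cases with
    | zero =>
      induction j using Fin.cases with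
      | zero =>
        apply part2.congr'
        filter_upwards [Filter.eventually_gt_atTop (0:ℝ)] with δ hδ
        exact ((tF δ hδ).limUnder_eq).symm
      | succ j =>
        apply Filter.Tendsto.congr' ?_ (tendsto_const_nhds (α := ℝ) (x := (0:ℝ)))
        filter_upwards [Filter.eventually_gt_atTop (0:ℝ)] with δ hδ
        exact ((tE' δ hδ j).limUnder_eq).symm
    | succ i =>
      induction j using Fin.cases with
      | zero =>
        apply Filter.Tendsto.congr' ?_ (tendsto_const_nhds (α := ℝ) (x := (0:ℝ)))
        filter_upwards [Filter.eventually_gt_atTop (0:ℝ)] with δ hδ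
        exact ((tE δ hδ i).limUnder_eq).symm
      | succ j =>
        apply Filter.Tendsto.congr' ?_ (tendsto_const_nhds (α := ℝ) (x := (0:ℝ)))
        filter_upwards [Filter.eventually_gt_atTop (0:ℝ)] with δ hδ
        exact ((tB δ hδ i j).limUnder_eq).symm
  | succ k =>
    induction i using Fin.cases with
    | zero =>
      induction j using Fin.cases with
      | zero =>
        have hGA : CC.GammaA g ginv 0 k.succ 0 0 x t
            = -(1/2) * CC.gradScal g ginv k x t := by
          simp [CC.GammaA, CC.shift, CC.gradScal]
        rw [hGA]
        apply Filter.Tendsto.congr' ?_ tendsto_const_nhds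
        filter_upwards [Filter.eventually_gt_atTop (0:ℝ)] with δ hδ
        exact ((tD δ hδ k).limUnder_eq).symm
      | succ j =>
        have hGA : CC.GammaA g ginv 0 k.succ 0 j.succ x t
            = -(CC.RicUp g ginv k j x t) := by
          simp [CC.GammaA, CC.shift]
        rw [hGA]
        apply Filter.Tendsto.congr' ?_ tendsto_const_nhds
        filter_upwards [Filter.eventually_gt_atTop (0:ℝ)] with δ hδ
        exact ((tC' δ hδ j k).limUnder_eq).symm
    | succ i =>
      induction j using Fin.cases with
      | zero =>
        have hGA : CC.GammaA g ginv 0 k.succ i.succ 0 x t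
            = -(CC.RicUp g ginv k i x t) := by
          simp [CC.GammaA, CC.shift]
        rw [hGA]
        apply Filter.Tendsto.congr' ?_ tendsto_const_nhds
        filter_upwards [Filter.eventually_gt_atTop (0:ℝ)] with δ hδ
        exact ((tC δ hδ i k).limUnder_eq).symm
      | succ j =>
        have hGA : CC.GammaA g ginv 0 k.succ i.succ j.succ x t
            = CC.Gamma g ginv k i j x t := by
          simp [CC.GammaA, CC.shift]
        rw [hGA]
        apply Filter.Tendsto.congr' ?_ tendsto_const_nhds
        filter_upwards [Filter.eventually_gt_atTop (0:ℝ)] with δ hδ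
        exact ((tA δ hδ i j k).limUnder_eq).symm
end
end
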